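/- arXiv:1802.03324 — 6 statements merged into one kernel-verified Lean document; each statement's English description precedes it below -/
import Mathlib

section
/- Let F = {1/k : k ∈ ℕ, k ≥ 1}. For every n ≥ 1, the lower box dimension of the n-fold iterated sumset nF = F + F + ⋯ + F (n times) is at least 1 - 2^{-n}. -/
open Set Metric Filter Pointwise

/-- Smallest number of balls of radius `r` needed to cover `E`. -/
noncomputable def coverNum {X : Type*} [PseudoMetricSpace X] (E : Set X) (r : ℝ) : ℕ :=
  sInf {n : ℕ | ∃ S : Finset X, S.card = n ∧ E ⊆ ⋃ x ∈ S, Metric.ball x r}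

/-- Upper box dimension of a bounded set. -/
noncomputable def upperBoxDimBdd {X : Type*} [PseudoMetricSpace X] (E : Set X) : ℝ :=
  Filter.limsup (fun r : ℝ => Real.log (coverNum E r : ℝ) / (-Real.log r))
    (nhdsWithin 0 (Set.Ioi 0))

/-- Lower box dimension of a bounded set. -/
noncomputable def lowerBoxDimBdd {X : Type*} [PseudoMetricSpace X] (E : Set X) : ℝ :=
  Filter.liminf (fun r : ℝ => Real.log (coverNum E r : ℝ) / (-Real.log r))
    (nhdsWithin 0 (Set.Ioi 0))

/-- Upper box dimension, extended to unbounded sets via suprema over bounded subsets. -/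
noncomputable def upperBoxDim {X : Type*} [PseudoMetricSpace X] (E : Set X) : ℝ :=
  ⨆ K : {K : Set X // K ⊆ E ∧ Bornology.IsBounded K}, upperBoxDimBdd K.1

/-- Lower box dimension, extended to unbounded sets via suprema over bounded subsets. -/
noncomputable def lowerBoxDim {X : Type*} [PseudoMetricSpace X] (E : Set X) : ℝ :=
  ⨆ K : {K : Set X // K ⊆ E ∧ Bornology.IsBounded K}, lowerBoxDimBdd K.1

/-- Assouad dimension. -/
noncomputable def assouadDim {X : Type*} [PseudoMetricSpace X] (F : Set X) : ℝ :=
  sInf {s : ℝ | 0 ≤ s ∧ ∃ C > 0, ∀ x ∈ F, ∀ R > 0, ∀ r, 0 < r → r < R →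
    (coverNum (Metric.ball x R ∩ F) r : ℝ) ≤ C * (R / r) ^ s}

/-- Lower dimension. -/
noncomputable def lowerDim {X : Type*} [PseudoMetricSpace X] (F : Set X) : ℝ :=
  sSup {s : ℝ | 0 ≤ s ∧ ∃ C > 0, ∀ x ∈ F, ∀ R, 0 < R → R < Metric.diam F →
    ∀ r, 0 < r → r < R →
      C * (R / r) ^ s ≤ (coverNum (Metric.ball x R ∩ F) r : ℝ)}

/-- `n`-fold iterated sumset: `iterSumset F n = F + F + ⋯ + F` (`n` times), with
`iterSumset F 0 = {0}`. -/
def iterSumset {M : Type*} [AddMonoid M] (F : Set M) : ℕ → Set M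
  | 0 => {0}
  | n + 1 => iterSumset F n + F

/-- Distance set of a set in a metric space. -/
def distSet {X : Type*} [PseudoMetricSpace X] (F : Set X) : Set ℝ :=
  {r : ℝ | ∃ x ∈ F, ∃ y ∈ F, dist x y = r}


lemma cover_exists (a b r : ℝ) (hr : 0 < r) :
    ∃ S : Finset ℝ, S.card ≤ ⌈(b - a) / r⌉₊ + 1 ∧ Icc a b ⊆ ⋃ x ∈ S, ball x r := by
  set N := ⌈(b - a) / r⌉₊ with hN
  refine ⟨(Finset.range (N + 1)).image (fun i : ℕ => a + i * r), ?_, ?_⟩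
  · exact (Finset.card_image_le).trans (by simp)
  · intro y hy
    have h1 : 0 ≤ y - a := by linarith [hy.1]
    set i := ⌊(y - a) / r⌋₊ with hi
    have hiN : i ≤ N := by
      have : (y - a) / r ≤ (b - a) / r := by gcongr; exact hy.2
      calc i ≤ ⌊(b - a) / r⌋₊ := Nat.floor_le_floor this
        _ ≤ N := Nat.floor_le_ceil _
    have hfl : (i : ℝ) ≤ (y - a) / r := Nat.floor_le (by positivity)
    have hfu : (y - a) / r < i + 1 := Nat.lt_floor_add_one _
    refine mem_iUnion.2 ⟨a + i * r, mem_iUnion.2 ⟨Finset.mem_image.2 ⟨i, Finset.mem_range.2 (by omega), rfl⟩, ?_⟩⟩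
    rw [mem_ball, Real.dist_eq, abs_lt]
    have h2 := (le_div_iff₀ hr).mp hfl
    have h3 := (div_lt_iff₀ hr).mp hfu
    constructor <;> nlinarith

lemma coverSet_nonempty {E : Set ℝ} {a b r : ℝ} (hE : E ⊆ Icc a b) (hr : 0 < r) :
    {n : ℕ | ∃ S : Finset ℝ, S.card = n ∧ E ⊆ ⋃ x ∈ S, Metric.ball x r}.Nonempty := by
  obtain ⟨S, _, hS⟩ := cover_exists a b r hr
  exact ⟨S.card, S, rfl, fun x hx => hS (hE hx)⟩

lemma coverNum_le {E : Set ℝ} {a b r : ℝ} (hE : E ⊆ Icc a b) (hr : 0 < r) :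
    coverNum E r ≤ ⌈(b - a) / r⌉₊ + 1 := by
  obtain ⟨S, hc, hS⟩ := cover_exists a b r hr
  refine le_trans ?_ hc
  apply Nat.sInf_le
  exact ⟨S, rfl, fun x hx => hS (hE hx)⟩

lemma le_coverNum {X : Type*} [PseudoMetricSpace X] {E : Set X} {r : ℝ} (T : Finset X)
    (hTE : ↑T ⊆ E)
    (hsep : ∀ x ∈ T, ∀ y ∈ T, x ≠ y → 2 * r ≤ dist x y)
    (hne : {n : ℕ | ∃ S : Finset X, S.card = n ∧ E ⊆ ⋃ x ∈ S, Metric.ball x r}.Nonempty) :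
    T.card ≤ coverNum E r := by
  apply le_csInf hne
  rintro k ⟨S, rfl, hS⟩
  classical
  have hch : ∀ t ∈ T, ∃ s ∈ S, t ∈ ball s r := by
    intro t ht
    have := hS (hTE ht)
    simpa using this
  choose f hfS hfb using hch
  apply Finset.card_le_card_of_injOn (fun t => if h : t ∈ T then f t h else t)
  · intro t ht; simp only [dif_pos (Finset.mem_coe.mp ht)]; exact hfS t ht
  · intro x hx y hy hxy
    simp only [Finset.mem_coe] at hx hy
    simp only [dif_pos hx, dif_pos hy] at hxy
    by_contra hne'
    have h1 := mem_ball.mp (hfb x hx)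
    have h2 := mem_ball.mp (hfb y hy)
    have := hsep x hx y hy hne'
    have hd := dist_triangle x (f x hx) y
    rw [hxy, dist_comm (f y hy) y] at hd
    rw [hxy] at h1
    linarith


lemma sum_mem_iterSumset {F : Set ℝ} : ∀ (n : ℕ) (f : ℕ → ℝ), (∀ i < n, f i ∈ F) →
    (∑ i ∈ Finset.range n, f i) ∈ iterSumset F n := by
  intro n
  induction n with
  | zero => intro f _; simp [iterSumset]
  | succ k ih =>
    intro f hf
    rw [Finset.sum_range_succ]
    exact Set.add_mem_add (ih f (fun i hi => hf i (by omega))) (hf k (by omega))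

lemma iterSumset_subset_Icc {F : Set ℝ} (hF : F ⊆ Icc 0 1) :
    ∀ n : ℕ, iterSumset F n ⊆ Icc 0 (n : ℝ) := by
  intro n
  induction n with
  | zero => simp [iterSumset]
  | succ k ih =>
    rintro x ⟨y, hy, z, hz, rfl⟩
    have h1 := ih hy
    have h2 := hF hz
    simp only [Set.mem_Icc] at h1 h2 ⊢
    push_cast
    constructor <;> linarith [h1.1, h1.2, h2.1, h2.2]

def seqf (n m : ℕ) : ℕ → ℕ
  | 0 => m
  | i + 1 => 8 * n * (seqf n m i) ^ 2

lemma one_le_seqf {n m : ℕ} (hn : 1 ≤ n) (hm : 1 ≤ m) : ∀ i, 1 ≤ seqf n m i := by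
  intro i
  induction i with
  | zero => exact hm
  | succ k ih => simp only [seqf]; nlinarith

lemma seqf_mono {n m : ℕ} (hn : 1 ≤ n) (hm : 1 ≤ m) : Monotone (seqf n m) := by
  apply monotone_nat_of_le_succ
  intro i
  have h := one_le_seqf hn hm i
  simp only [seqf]; nlinarith

lemma seqf_eq {n m : ℕ} : ∀ i, seqf n m i = (8 * n) ^ (2 ^ i - 1) * m ^ (2 ^ i) := by
  intro i
  induction i with
  | zero => simp [seqf]
  | succ k ih =>
    have h2 : (1:ℕ) ≤ 2 ^ k := Nat.one_le_two_pow
    simp only [seqf, ih]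
    have he : 2 ^ (k+1) - 1 = (2 ^ k - 1) + (2 ^ k - 1) + 1 := by omega
    have he2 : 2 ^ (k+1) = 2 ^ k + 2 ^ k := by omega
    rw [he, he2]
    ring

lemma seqf_ge {n m : ℕ} (hn : 1 ≤ n) : ∀ i, m ^ (2 ^ i) ≤ seqf n m i := by
  intro i
  rw [seqf_eq]
  have : 1 ≤ (8 * n) ^ (2 ^ i - 1) := Nat.one_le_pow _ _ (by omega)
  nlinarith [Nat.zero_le (m ^ (2 ^ i))]

lemma sum_two_pow (n : ℕ) : ∑ i ∈ Finset.range n, 2 ^ i = 2 ^ n - 1 := by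
  induction n with
  | zero => simp
  | succ k ih =>
    rw [Finset.sum_range_succ, ih]
    have : (1:ℕ) ≤ 2 ^ k := Nat.one_le_two_pow
    omega


noncomputable def pt (n m : ℕ) (f : ℕ → ℕ) : ℝ :=
  ∑ i ∈ Finset.range n, ((seqf n m i + f i : ℕ) : ℝ)⁻¹

-- single term bounds
lemma term_mem {n m : ℕ} (hn : 1 ≤ n) (hm : 1 ≤ m) {i a : ℕ} (ha : a < seqf n m i) :
    ((seqf n m i : ℝ))⁻¹/2 < ((seqf n m i + a : ℕ) : ℝ)⁻¹ ∧
      ((seqf n m i + a : ℕ) : ℝ)⁻¹ ≤ ((seqf n m i : ℝ))⁻¹ := by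
  have h1 : (1:ℝ) ≤ (seqf n m i : ℝ) := by exact_mod_cast one_le_seqf hn hm i
  have h2 : ((seqf n m i + a : ℕ) : ℝ) < 2 * (seqf n m i : ℝ) := by
    push_cast; exact_mod_cast by push_cast; linarith [show (a:ℝ) < (seqf n m i : ℝ) from by exact_mod_cast ha]
  have h3 : (seqf n m i : ℝ) ≤ ((seqf n m i + a : ℕ) : ℝ) := by push_cast; linarith [show (0:ℝ) ≤ (a:ℝ) from by positivity]
  have hx0 : (0:ℝ) < ((seqf n m i + a : ℕ) : ℝ) := by linarith
  constructor
  · calc ((seqf n m i : ℝ))⁻¹/2 = (2 * (seqf n m i : ℝ))⁻¹ := by rw [mul_inv]; ring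
      _ < ((seqf n m i + a : ℕ) : ℝ)⁻¹ := inv_strictAnti₀ hx0 h2
  · exact inv_anti₀ (by linarith) h3


lemma head_bound {n m : ℕ} (hn : 1 ≤ n) (hm : 1 ≤ m) {i a b : ℕ} (ha : a < seqf n m i)
    (hb : b < seqf n m i) (hab : a < b) :
    (4 * (seqf n m i : ℝ) ^ 2)⁻¹ ≤
      ((seqf n m i + a : ℕ) : ℝ)⁻¹ - ((seqf n m i + b : ℕ) : ℝ)⁻¹ := by
  have h1 : (1:ℝ) ≤ (seqf n m i : ℝ) := by exact_mod_cast one_le_seqf hn hm i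
  set M := (seqf n m i : ℝ) with hM
  set A := ((seqf n m i + a : ℕ) : ℝ) with hA
  set B := ((seqf n m i + b : ℕ) : ℝ) with hB
  have hMA : M ≤ A := by rw [hA]; push_cast; linarith [show (0:ℝ) ≤ a by positivity]
  have hA2 : A < 2 * M := by rw [hA]; push_cast; have : (a:ℝ) < M := by rw [hM]; exact_mod_cast ha
                             linarith
  have hB2 : B < 2 * M := by rw [hB]; push_cast; have : (b:ℝ) < M := by rw [hM]; exact_mod_cast hb
                             linarith
  have hAB : A + 1 ≤ B := by rw [hA, hB]; push_cast
                             have : (a:ℝ) + 1 ≤ b := by exact_mod_cast hab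
                             linarith
  have hA0 : (0:ℝ) < A := by linarith
  have hB0 : (0:ℝ) < B := by linarith
  have hx : A⁻¹ - B⁻¹ = (B - A) / (A * B) := by field_simp
  rw [hx, inv_eq_one_div, div_le_div_iff₀ (by positivity) (by positivity)]
  nlinarith

lemma tail_bound {n m : ℕ} (hn : 1 ≤ n) (hm : 1 ≤ m) {i a b : ℕ} (ha : a < seqf n m i)
    (hb : b < seqf n m i) :
    |((seqf n m i + a : ℕ) : ℝ)⁻¹ - ((seqf n m i + b : ℕ) : ℝ)⁻¹| ≤
      (2 * (seqf n m i : ℝ))⁻¹ := by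
  obtain ⟨h1, h2⟩ := term_mem hn hm ha
  obtain ⟨h3, h4⟩ := term_mem hn hm hb
  rw [abs_le]
  have : (2 * (seqf n m i : ℝ))⁻¹ = ((seqf n m i : ℝ))⁻¹/2 := by rw [mul_inv]; ring
  rw [this]
  constructor <;> linarith

lemma separation {n m : ℕ} (hn : 1 ≤ n) (hm : 1 ≤ m) (f g : ℕ → ℕ)
    (hf : ∀ i < n, f i < seqf n m i) (hg : ∀ i < n, g i < seqf n m i)
    (hfg : ∃ i, i < n ∧ f i ≠ g i) :
    (8 * ((seqf n m (n-1) : ℝ)) ^ 2)⁻¹ ≤ |pt n m f - pt n m g| := by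
  classical
  set i₀ := Nat.find hfg with hi0def
  obtain ⟨hi0n, hne0⟩ := Nat.find_spec hfg
  have heq : ∀ j < i₀, f j = g j := by
    intro j hj
    have := Nat.find_min hfg hj
    push_neg at this
    exact this (by omega)
  set d : ℕ → ℝ := fun i => ((seqf n m i + f i : ℕ) : ℝ)⁻¹ - ((seqf n m i + g i : ℕ) : ℝ)⁻¹ with hd
  have hsum : pt n m f - pt n m g = ∑ i ∈ Finset.range n, d i := by
    rw [pt, pt, ← Finset.sum_sub_distrib]
  have hsplit : ∑ i ∈ Finset.range n, d i = d i₀ + ∑ i ∈ Finset.Ico (i₀+1) n, d i := by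
    rw [← Finset.sum_range_add_sum_Ico _ (le_of_lt hi0n)]
    rw [Finset.sum_eq_zero (fun j hj => by
      simp only [hd]
      rw [heq j (Finset.mem_range.mp hj)]; ring), zero_add]
    exact Finset.sum_eq_sum_Ico_succ_bot hi0n _
  -- bounds
  have h1 : (1:ℝ) ≤ (seqf n m i₀ : ℝ) := by exact_mod_cast one_le_seqf hn hm i₀
  set M := (seqf n m i₀ : ℝ) with hM
  have hhead : (4 * M ^ 2)⁻¹ ≤ |d i₀| := by
    rcases Nat.lt_or_ge (f i₀) (g i₀) with h | h
    · have := head_bound hn hm (hf i₀ hi0n) (hg i₀ hi0n) h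
      calc (4 * M ^ 2)⁻¹ ≤ d i₀ := this
        _ ≤ |d i₀| := le_abs_self _
    · have hne0' : f i₀ ≠ g i₀ := hne0
      have h' : g i₀ < f i₀ := by omega
      have := head_bound hn hm (hg i₀ hi0n) (hf i₀ hi0n) h'
      calc (4 * M ^ 2)⁻¹ ≤ -(d i₀) := by simp only [hd]; linarith [this]
        _ ≤ |d i₀| := neg_le_abs _
  have htail : |∑ i ∈ Finset.Ico (i₀+1) n, d i| ≤ (16 * M ^ 2)⁻¹ := by
    have hstep : ∀ i ∈ Finset.Ico (i₀+1) n, |d i| ≤ (2 * (seqf n m (i₀+1) : ℝ))⁻¹ := by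
      intro i hi
      obtain ⟨hi1, hi2⟩ := Finset.mem_Ico.mp hi
      refine (tail_bound hn hm (hf i hi2) (hg i hi2)).trans ?_
      have hmono : (seqf n m (i₀+1) : ℝ) ≤ (seqf n m i : ℝ) := by
        exact_mod_cast seqf_mono hn hm hi1
      have hsp : (1:ℝ) ≤ (seqf n m (i₀+1) : ℝ) := by exact_mod_cast one_le_seqf hn hm _
      apply inv_anti₀ (by linarith)
      linarith
    calc |∑ i ∈ Finset.Ico (i₀+1) n, d i| ≤ ∑ i ∈ Finset.Ico (i₀+1) n, |d i| :=
          Finset.abs_sum_le_sum_abs _ _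
      _ ≤ ∑ _i ∈ Finset.Ico (i₀+1) n, (2 * (seqf n m (i₀+1) : ℝ))⁻¹ :=
          Finset.sum_le_sum hstep
      _ = (Finset.Ico (i₀+1) n).card * (2 * (seqf n m (i₀+1) : ℝ))⁻¹ := by
          rw [Finset.sum_const, nsmul_eq_mul]
      _ ≤ (n : ℝ) * (2 * (seqf n m (i₀+1) : ℝ))⁻¹ := by
          apply mul_le_mul_of_nonneg_right _ (by positivity)
          rw [Nat.card_Ico]
          exact_mod_cast Nat.sub_le n (i₀+1)
      _ ≤ (16 * M ^ 2)⁻¹ := by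
          have hseq : (seqf n m (i₀+1) : ℝ) = 8 * n * M ^ 2 := by
            simp only [hM, seqf]; push_cast; ring
          rw [hseq]
          have hn' : (1:ℝ) ≤ (n:ℝ) := by exact_mod_cast hn
          rw [mul_inv_le_iff₀ (by positivity), inv_eq_one_div, div_mul_eq_mul_div,
            le_div_iff₀ (by positivity)]
          nlinarith
  have hfinal : (8 * M ^ 2)⁻¹ ≤ |pt n m f - pt n m g| := by
    rw [hsum, hsplit]
    have := abs_sub_abs_le_abs_sub (d i₀) (-(∑ i ∈ Finset.Ico (i₀+1) n, d i))
    rw [abs_neg, sub_neg_eq_add] at this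
    have h2 : (4 * M ^ 2)⁻¹ - (16 * M ^ 2)⁻¹ ≤ |d i₀ + ∑ i ∈ Finset.Ico (i₀+1) n, d i| := by
      linarith
    refine le_trans ?_ h2
    rw [mul_inv, mul_inv, mul_inv]
    have hM2 : (0:ℝ) < (M^2)⁻¹ := by positivity
    nlinarith
  refine le_trans ?_ hfinal
  apply inv_anti₀ (by positivity)
  have hle : (seqf n m i₀ : ℝ) ≤ (seqf n m (n-1) : ℝ) := by
    exact_mod_cast seqf_mono hn hm (Nat.le_sub_one_of_lt hi0n)
  have h0 : (1:ℝ) ≤ (seqf n m (n-1) : ℝ) := by exact_mod_cast one_le_seqf hn hm _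
  nlinarith


def Fset : Set ℝ := {x : ℝ | ∃ k : ℕ, 1 ≤ k ∧ x = 1 / k}

lemma Fset_subset : Fset ⊆ Icc 0 1 := by
  rintro x ⟨k, hk, rfl⟩
  have : (1:ℝ) ≤ k := by exact_mod_cast hk
  constructor
  · positivity
  · rw [div_le_one (by linarith)]; linarith

noncomputable def emap (n m : ℕ) (j : (i : Fin n) → Fin (seqf n m i)) : ℕ → ℕ :=
  fun i => if h : i < n then (j ⟨i, h⟩ : ℕ) else 0

lemma emap_lt {n m : ℕ} (j : (i : Fin n) → Fin (seqf n m i)) :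
    ∀ i < n, emap n m j i < seqf n m i := by
  intro i hi
  simp only [emap, dif_pos hi]
  exact (j ⟨i, hi⟩).isLt

lemma coverNum_lower {n m : ℕ} (hn : 1 ≤ n) (hm : 1 ≤ m) {r : ℝ} (hr : 0 < r)
    (hsep : 2 * r ≤ (8 * ((seqf n m (n-1) : ℝ)) ^ 2)⁻¹) :
    m ^ (2 ^ n - 1) ≤ coverNum (iterSumset Fset n) r := by
  classical
  set P : ((i : Fin n) → Fin (seqf n m i)) → ℝ := fun j => pt n m (emap n m j) with hP
  have hPsep : ∀ j j', j ≠ j' →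
      (8 * ((seqf n m (n-1) : ℝ)) ^ 2)⁻¹ ≤ |P j - P j'| := by
    intro j j' hjj'
    apply separation hn hm _ _ (emap_lt j) (emap_lt j')
    by_contra hcon
    push_neg at hcon
    apply hjj'
    funext i
    have := hcon i i.isLt
    simp only [emap, dif_pos i.isLt] at this
    exact Fin.ext (by simpa using this)
  have hpos : (0:ℝ) < (8 * ((seqf n m (n-1) : ℝ)) ^ 2)⁻¹ := by
    have : (1:ℝ) ≤ (seqf n m (n-1) : ℝ) := by exact_mod_cast one_le_seqf hn hm _
    positivity
  have hPinj : Function.Injective P := by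
    intro j j' h
    by_contra hne
    have := hPsep j j' hne
    rw [h, sub_self, abs_zero] at this
    linarith
  set T : Finset ℝ := Finset.image P Finset.univ with hT
  have hcard : T.card = ∏ i : Fin n, seqf n m i := by
    rw [hT, Finset.card_image_of_injective _ hPinj, Finset.card_univ, Fintype.card_pi]
    simp
  have hTE : ↑T ⊆ iterSumset Fset n := by
    intro x hx
    simp only [hT, Finset.coe_image, Set.mem_image] at hx
    obtain ⟨j, _, rfl⟩ := hx
    apply sum_mem_iterSumset
    intro i hi
    exact ⟨seqf n m i + emap n m j i, by have := one_le_seqf hn hm i; omega, by rw [one_div]⟩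
  have hTsep : ∀ x ∈ T, ∀ y ∈ T, x ≠ y → 2 * r ≤ dist x y := by
    intro x hx y hy hxy
    simp only [hT, Finset.mem_image] at hx hy
    obtain ⟨j, _, rfl⟩ := hx
    obtain ⟨j', _, rfl⟩ := hy
    have hjj' : j ≠ j' := fun h => hxy (by rw [h])
    rw [Real.dist_eq]
    exact hsep.trans (hPsep j j' hjj')
  have hmain := le_coverNum T hTE hTsep
    (coverSet_nonempty (iterSumset_subset_Icc Fset_subset n) hr)
  refine le_trans ?_ hmain
  rw [hcard, Fin.prod_univ_eq_prod_range (fun i => seqf n m i)]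
  calc m ^ (2 ^ n - 1) = ∏ i ∈ Finset.range n, m ^ (2 ^ i) := by
        rw [Finset.prod_pow_eq_pow_sum]
        rw [sum_two_pow]
    _ ≤ ∏ i ∈ Finset.range n, seqf n m i :=
        Finset.prod_le_prod (fun _ _ => Nat.zero_le _) (fun i _ => seqf_ge hn i)


-- eventual upper bound for covering function of subsets of [0,b]
lemma ev_upper {K : Set ℝ} {b : ℝ} (hb : 0 ≤ b) (hK : K ⊆ Icc 0 b) :
    ∀ᶠ r in nhdsWithin (0:ℝ) (Set.Ioi 0),
      Real.log (coverNum K r : ℝ) / (-Real.log r) ≤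
        1 + Real.log (b + 2) / (-Real.log r) := by
  filter_upwards [Ioo_mem_nhdsGT_of_mem (left_mem_Ico.mpr one_pos)] with r hr
  obtain ⟨hr0, hr1⟩ := hr
  have hlr : 0 < -Real.log r := by
    simpa using Real.log_neg hr0 hr1
  have hcov : (coverNum K r : ℝ) ≤ (b + 2) / r := by
    have h1 : coverNum K r ≤ ⌈(b - 0) / r⌉₊ + 1 := coverNum_le hK hr0
    have h2 : (⌈(b - 0) / r⌉₊ : ℝ) < (b - 0) / r + 1 := Nat.ceil_lt_add_one (by rw [sub_zero]; positivity)
    have h3 : (coverNum K r : ℝ) ≤ (⌈(b - 0) / r⌉₊ : ℝ) + 1 := by exact_mod_cast h1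
    have h4 : (2:ℝ) ≤ 2 / r := by
      rw [le_div_iff₀ hr0]; linarith
    have h5 : b / r + 2 ≤ (b + 2) / r := by
      rw [add_div]; gcongr
    simp only [sub_zero] at h2 h3
    linarith
  have hlog : Real.log (coverNum K r : ℝ) ≤ Real.log (b + 2) - Real.log r := by
    rw [← Real.log_div (by positivity) (ne_of_gt hr0)]
    rcases Nat.eq_zero_or_pos (coverNum K r) with h | h
    · rw [h]
      simp only [Nat.cast_zero, Real.log_zero]
      apply Real.log_nonneg
      rw [le_div_iff₀ hr0]; linarith
    · apply Real.log_le_log (by exact_mod_cast h) hcov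
  calc Real.log (coverNum K r : ℝ) / (-Real.log r)
      ≤ (Real.log (b + 2) - Real.log r) / (-Real.log r) := by gcongr
    _ = 1 + Real.log (b + 2) / (-Real.log r) := by
        rw [sub_eq_add_neg, add_div, div_self (ne_of_gt hlr), add_comm]
  
-- the bound function tends to 1
lemma tendsto_bound (c : ℝ) :
    Tendsto (fun r : ℝ => 1 + c / (-Real.log r)) (nhdsWithin (0:ℝ) (Set.Ioi 0)) (nhds 1) := by
  have h1 : Tendsto (fun r : ℝ => -Real.log r) (nhdsWithin (0:ℝ) (Set.Ioi 0)) atTop :=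
    Filter.tendsto_neg_atTop_iff.mpr Real.tendsto_log_nhdsGT_zero
  have h2 : Tendsto (fun r : ℝ => c / (-Real.log r)) (nhdsWithin (0:ℝ) (Set.Ioi 0)) (nhds 0) :=
    Tendsto.div_atTop tendsto_const_nhds h1
  simpa using (tendsto_const_nhds (x := (1:ℝ))).add h2

lemma ev_nonneg (K : Set ℝ) :
    ∀ᶠ r in nhdsWithin (0:ℝ) (Set.Ioi 0),
      0 ≤ Real.log (coverNum K r : ℝ) / (-Real.log r) := by
  filter_upwards [Ioo_mem_nhdsGT_of_mem (left_mem_Ico.mpr one_pos)] with r hr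
  have hlr : 0 < -Real.log r := by simpa using Real.log_neg hr.1 hr.2
  exact div_nonneg (Real.log_natCast_nonneg _) hlr.le

lemma lowerBoxDimBdd_le_one {K : Set ℝ} {b : ℝ} (hb : 0 ≤ b) (hK : K ⊆ Icc 0 b) :
    lowerBoxDimBdd K ≤ 1 := by
  rw [lowerBoxDimBdd]
  have hlim : Filter.liminf (fun r : ℝ => 1 + Real.log (b + 2) / (-Real.log r))
      (nhdsWithin (0:ℝ) (Set.Ioi 0)) = 1 := (tendsto_bound _).liminf_eq
  rw [← hlim]
  exact Filter.liminf_le_liminf (ev_upper hb hK)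
    (Filter.isBoundedUnder_of_eventually_ge (ev_nonneg K))
    (((tendsto_bound _).isBoundedUnder_le).isCoboundedUnder_ge)


lemma seq_sq_bound {n m : ℕ} (hn : 1 ≤ n) :
    8 * (seqf n m (n-1))^2 ≤ 8 * ((8*n)^(2^n) * m^(2^n)) := by
  rw [seqf_eq]
  rw [mul_pow, ← pow_mul, ← pow_mul]
  have h0 : 1 ≤ 2^(n-1) := Nat.one_le_two_pow
  have h1 : 2^(n-1) * 2 = 2^n := by rw [← pow_succ]; congr 1; omega
  have h2 : (2^(n-1)-1) * 2 ≤ 2^n := by omega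
  rw [h1]
  have h3 : (8*n)^((2^(n-1)-1)*2) ≤ (8*n)^(2^n) :=
    Nat.pow_le_pow_right (by omega) h2
  nlinarith [Nat.zero_le (m^(2^n))]

lemma tendsto_g (a c : ℝ) :
    Tendsto (fun r : ℝ => a - c / (-Real.log r)) (nhdsWithin (0:ℝ) (Set.Ioi 0)) (nhds a) := by
  have h1 : Tendsto (fun r : ℝ => -Real.log r) (nhdsWithin (0:ℝ) (Set.Ioi 0)) atTop :=
    Filter.tendsto_neg_atTop_iff.mpr Real.tendsto_log_nhdsGT_zero
  have h2 : Tendsto (fun r : ℝ => c / (-Real.log r)) (nhdsWithin (0:ℝ) (Set.Ioi 0)) (nhds 0) :=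
    Tendsto.div_atTop tendsto_const_nhds h1
  simpa using (tendsto_const_nhds (x := a)).sub h2

theorem liminf_lower {n : ℕ} (hn : 1 ≤ n) :
    1 - ((2:ℝ)^n)⁻¹ ≤ lowerBoxDimBdd (iterSumset Fset n) := by
  have h2n : (0:ℝ) < 2^n := by positivity
  set θ : ℝ := ((2:ℝ)^n)⁻¹ with hθ
  have hθpos : 0 < θ := by positivity
  set A : ℝ := 8 * (8*(n:ℝ))^(2^n) with hA
  have hn1 : (1:ℝ) ≤ (n:ℝ) := by exact_mod_cast hn
  have hA1 : (1:ℝ) ≤ A := by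
    have h8 : (1:ℝ) ≤ 8*(n:ℝ) := by linarith
    have := one_le_pow₀ (n := 2^n) h8
    nlinarith
  have hApos : (0:ℝ) < A := by linarith
  set k : ℕ := 2^n - 1 with hk
  have hkc : ((k:ℕ):ℝ) = (2:ℝ)^n - 1 := by
    rw [hk, Nat.cast_sub Nat.one_le_two_pow]; push_cast; ring
  set C : ℝ := (k : ℝ) * (θ * (Real.log 2 + Real.log A) + Real.log 2) with hC
  set u : ℝ → ℝ := fun r => Real.log (coverNum (iterSumset Fset n) r : ℝ) / (-Real.log r)
    with hu
  set g : ℝ → ℝ := fun r => (1 - θ) - C / (-Real.log r) with hg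
  have hr₀pos : (0:ℝ) < min 1 (2*A)⁻¹ := by positivity
  have hgle : ∀ᶠ r in nhdsWithin (0:ℝ) (Set.Ioi 0), g r ≤ u r := by
    filter_upwards [Ioo_mem_nhdsGT_of_mem (left_mem_Ico.mpr hr₀pos)] with r hr
    obtain ⟨hr0, hrm⟩ := hr
    have hr1 : r < 1 := lt_of_lt_of_le hrm (min_le_left _ _)
    have hrA : r < (2*A)⁻¹ := lt_of_lt_of_le hrm (min_le_right _ _)
    have hlr : 0 < -Real.log r := by simpa using Real.log_neg hr0 hr1
    have h2rApos : (0:ℝ) < 2*r*A := by positivity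
    have h2rA1 : 2*r*A < 1 := by
      rw [← one_div, lt_div_iff₀ (by positivity)] at hrA
      nlinarith
    set x : ℝ := (2*r*A) ^ (-θ) with hx
    have hxpos : 0 < x := Real.rpow_pos_of_pos h2rApos _
    have hx1 : 1 < x := by
      rw [hx, Real.one_lt_rpow_iff_of_pos h2rApos]
      right; exact ⟨h2rA1, by linarith⟩
    set m : ℕ := ⌊x⌋₊ with hm
    have hm1 : 1 ≤ m := Nat.le_floor (by exact_mod_cast hx1.le)
    have hmx : (m:ℝ) ≤ x := Nat.floor_le hxpos.le
    have hx2m : x/2 ≤ (m:ℝ) := by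
      rcases le_or_gt 2 x with h | h
      · have := Nat.sub_one_lt_floor x
        rw [← hm] at this
        linarith
      · have : (1:ℝ) ≤ (m:ℝ) := by exact_mod_cast hm1
        linarith
    have hpow : (m:ℝ)^(2^n) ≤ (2*r*A)⁻¹ := by
      calc (m:ℝ)^(2^n) ≤ x^(2^n) := pow_le_pow_left₀ (by positivity) hmx _
        _ = x ^ ((2^n : ℕ) : ℝ) := (Real.rpow_natCast x _).symm
        _ = (2*r*A) ^ ((-θ) * ((2^n : ℕ) : ℝ)) := by
            rw [hx, ← Real.rpow_mul h2rApos.le]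
        _ = (2*r*A) ^ (-(1:ℝ)) := by
            congr 1
            push_cast
            rw [hθ]
            field_simp
        _ = (2*r*A)⁻¹ := Real.rpow_neg_one _
    have hseq1 : (1:ℝ) ≤ (seqf n m (n-1) : ℝ) := by exact_mod_cast one_le_seqf hn hm1 _
    have hsep : 2 * r ≤ (8 * ((seqf n m (n-1) : ℝ)) ^ 2)⁻¹ := by
      have hb : (8 * ((seqf n m (n-1) : ℝ)) ^ 2) ≤ A * (m:ℝ)^(2^n) := by
        have := seq_sq_bound (n := n) (m := m) hn
        have hcast : ((8 * (seqf n m (n-1))^2 : ℕ) : ℝ) ≤ ((8 * ((8*n)^(2^n) * m^(2^n)) : ℕ) : ℝ) := by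
          exact_mod_cast this
        push_cast at hcast
        calc (8 * ((seqf n m (n-1) : ℝ)) ^ 2) ≤ 8 * ((8*(n:ℝ))^(2^n) * (m:ℝ)^(2^n)) := hcast
          _ = A * (m:ℝ)^(2^n) := by rw [hA]; ring
      have hb2 : (8 * ((seqf n m (n-1) : ℝ)) ^ 2) ≤ (2*r)⁻¹ := by
        have h1 : A * (m:ℝ)^(2^n) ≤ A * (2*r*A)⁻¹ := by
          apply mul_le_mul_of_nonneg_left hpow (by linarith)
        have h2 : A * (2*r*A)⁻¹ = (2*r)⁻¹ := by
          field_simp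
        linarith
      rw [← inv_inv (2*r)]
      exact inv_anti₀ (by positivity) hb2
    have hcount : ((m:ℝ))^(k:ℕ) ≤ (coverNum (iterSumset Fset n) r : ℝ) := by
      exact_mod_cast coverNum_lower hn hm1 hr0 hsep
    have hxk : (x/2)^(k:ℕ) ≤ (coverNum (iterSumset Fset n) r : ℝ) :=
      le_trans (pow_le_pow_left₀ (by positivity) hx2m _) hcount
    have hlogc : (k:ℝ) * Real.log (x/2) ≤ Real.log (coverNum (iterSumset Fset n) r : ℝ) := by
      rw [← Real.log_pow]
      exact Real.log_le_log (by positivity) hxk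
    have hlogx : Real.log x = (-θ) * (Real.log 2 + Real.log r + Real.log A) := by
      rw [hx, Real.log_rpow h2rApos]
      congr 1
      rw [Real.log_mul (by positivity) (ne_of_gt hApos), Real.log_mul (by norm_num) (ne_of_gt hr0)]
    have hlog2 : Real.log (x/2) = θ * (-Real.log r) - (θ * (Real.log 2 + Real.log A) + Real.log 2) := by
      rw [Real.log_div (ne_of_gt hxpos) (by norm_num), hlogx]
      ring
    have hnum : (1 - θ) * (-Real.log r) - C ≤ Real.log (coverNum (iterSumset Fset n) r : ℝ) := by
      refine le_trans ?_ hlogc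
      rw [hlog2, hC]
      have hkθ : (k:ℝ) * θ = 1 - θ := by
        rw [hkc, hθ]
        field_simp
      nlinarith [hkθ]
    have hdiv : ((1 - θ) * (-Real.log r) - C) / (-Real.log r) ≤ u r := by
      rw [hu]
      exact (div_le_div_iff_of_pos_right hlr).mpr hnum
    calc g r = ((1 - θ) * (-Real.log r) - C) / (-Real.log r) := by
          rw [hg, sub_div, mul_div_cancel_right₀ _ (ne_of_gt hlr)]
      _ ≤ u r := hdiv
  have htendg : Tendsto g (nhdsWithin (0:ℝ) (Set.Ioi 0)) (nhds (1 - θ)) := tendsto_g _ _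
  have hcob : IsCoboundedUnder (fun x1 x2 => x1 ≥ x2) (nhdsWithin (0:ℝ) (Set.Ioi 0)) u := by
    apply Filter.IsBoundedUnder.isCoboundedUnder_ge
    apply Filter.isBoundedUnder_of_eventually_le (a := 2)
    have h1 := ev_upper (b := (n:ℝ)) (by positivity) (iterSumset_subset_Icc Fset_subset n)
    have h2 : ∀ᶠ r in nhdsWithin (0:ℝ) (Set.Ioi 0),
        1 + Real.log ((n:ℝ) + 2) / (-Real.log r) < 2 :=
      (tendsto_bound _).eventually_lt_const (by norm_num)
    filter_upwards [h1, h2] with r hr1 hr2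
    rw [hu]; dsimp only; linarith
  have hmain := Filter.liminf_le_liminf hgle htendg.isBoundedUnder_ge hcob
  rw [htendg.liminf_eq] at hmain
  rw [lowerBoxDimBdd]
  exact hmain


/-- For `F = {1/k : k ≥ 1}`, the lower box dimension of the `n`-fold iterated sumset
`nF` is at least `1 - 2⁻ⁿ`. -/
theorem stmt1 (n : ℕ) (hn : 1 ≤ n) :
    1 - (2 : ℝ) ^ (-(n : ℝ)) ≤
      lowerBoxDim (iterSumset {x : ℝ | ∃ k : ℕ, 1 ≤ k ∧ x = 1 / k} n) := by
  have hrw : (2:ℝ) ^ (-(n:ℝ)) = ((2:ℝ)^n)⁻¹ := by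
    rw [Real.rpow_neg (by norm_num), Real.rpow_natCast]
  rw [hrw]
  show 1 - ((2:ℝ)^n)⁻¹ ≤ lowerBoxDim (iterSumset Fset n)
  have hsub := iterSumset_subset_Icc Fset_subset n
  have hEb : Bornology.IsBounded (iterSumset Fset n) :=
    (Metric.isBounded_Icc 0 (n:ℝ)).subset hsub
  have hbdd : BddAbove (Set.range fun K : {K : Set ℝ // K ⊆ iterSumset Fset n ∧ Bornology.IsBounded K} => lowerBoxDimBdd K.1) := by
    refine ⟨1, ?_⟩
    rintro x ⟨K, rfl⟩
    exact lowerBoxDimBdd_le_one (by positivity) (K.2.1.trans hsub)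
  calc 1 - ((2:ℝ)^n)⁻¹ ≤ lowerBoxDimBdd (iterSumset Fset n) := liminf_lower hn
    _ ≤ lowerBoxDim (iterSumset Fset n) :=
        le_ciSup hbdd ⟨iterSumset Fset n, Set.Subset.rfl, hEb⟩
end

section
/- For every n ≥ 1, the set {1/k : k ∈ ℕ, k ≥ 1} + {1/k : k ∈ ℕ, k ≥ 1} + ⋯ (iterated n times) is δ-dense in [0, δ^{2^{-n}}] for every δ ∈ (0,1). -/
open Set Metric Filter Pointwise

lemma claimA (ε : ℝ) (hε0 : 0 < ε) (y : ℝ) (hy : 0 < y) (hy2 : y ^ 2 ≤ ε) :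
    ∃ k : ℕ, 1 ≤ k ∧ 1 / (k : ℝ) ≤ y ∧ y - 1 / (k : ℝ) ≤ ε := by
  set k := ⌈1 / y⌉₊ with hk
  have hy1 : 0 < 1 / y := by positivity
  have hk1 : 1 ≤ k := Nat.ceil_pos.mpr hy1
  have h1 : 1 / y ≤ (k : ℝ) := Nat.le_ceil _
  have h2 : (k : ℝ) < 1 / y + 1 := Nat.ceil_lt_add_one hy1.le
  have hkpos : (0 : ℝ) < (k : ℝ) := lt_of_lt_of_le hy1 h1
  have hky : 1 / (k : ℝ) ≤ y := by
    rw [div_le_iff₀ hkpos]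
    calc (1 : ℝ) = y * (1 / y) := by field_simp
    _ ≤ y * k := by nlinarith
  refine ⟨k, hk1, hky, ?_⟩
  have h3 : y * (k : ℝ) < 1 + y := by
    have := mul_lt_mul_of_pos_left h2 hy
    calc y * (k : ℝ) < y * (1 / y + 1) := this
    _ = 1 + y := by field_simp
  have h4 : y - 1 / (k : ℝ) = (y * k - 1) / k := by field_simp
  rw [h4]
  have h5 : (y * k - 1) / k ≤ y * y := by
    rw [div_le_iff₀ hkpos]
    have h6 : 1 ≤ y * k := (div_le_iff₀ hkpos).mp hky
    nlinarith [mul_le_mul_of_nonneg_left h6 hy.le]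
  nlinarith

lemma mem_multiples (k : ℕ) (hk : 1 ≤ k) (m : ℕ) :
    (m : ℝ) / (k : ℝ) ∈ iterSumset {x : ℝ | ∃ k : ℕ, 1 ≤ k ∧ x = 1 / k} m := by
  induction m with
  | zero => simp [iterSumset]
  | succ m ih =>
    have : ((m + 1 : ℕ) : ℝ) / (k : ℝ) = (m : ℝ) / k + 1 / k := by
      push_cast; ring
    rw [iterSumset, this]
    exact Set.add_mem_add ih ⟨k, hk, rfl⟩

/-- For every `n ≥ 1` and every `δ ∈ (0,1)`, the `n`-fold iterated sumset of
`{1/k : k ≥ 1}` is `δ`-dense in `[0, δ^(2⁻ⁿ)]`. -/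
theorem stmt3 (n : ℕ) (hn : 1 ≤ n) (δ : ℝ) (hδ : δ ∈ Set.Ioo (0 : ℝ) 1) :
    ∀ y ∈ Set.Icc (0 : ℝ) (δ ^ ((2 : ℝ) ^ (-(n : ℝ)))),
      ∃ x ∈ iterSumset {x : ℝ | ∃ k : ℕ, 1 ≤ k ∧ x = 1 / k} n, |y - x| ≤ δ := by
  obtain ⟨hδ0, hδ1⟩ := hδ
  clear hn
  induction n with
  | zero =>
    intro y hy
    obtain ⟨hy0, hy1⟩ := hy
    simp only [Nat.cast_zero, neg_zero, Real.rpow_zero, Real.rpow_one] at hy1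
    refine ⟨0, by simp [iterSumset], ?_⟩
    rw [sub_zero, abs_of_nonneg hy0]
    exact hy1
  | succ n IH =>
    intro y hy
    obtain ⟨hy0, hy1⟩ := hy
    set ε := δ ^ ((2 : ℝ) ^ (-(n : ℝ))) with hε
    have hε0 : 0 < ε := Real.rpow_pos_of_pos hδ0 _
    have hsq : (δ ^ ((2 : ℝ) ^ (-((n + 1 : ℕ) : ℝ)))) ^ 2 = ε := by
      rw [hε, ← Real.rpow_natCast (δ ^ ((2 : ℝ) ^ (-((n + 1 : ℕ) : ℝ)))) 2,
        ← Real.rpow_mul hδ0.le]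
      congr 1
      push_cast
      rw [show ((2 : ℝ) ^ (-((n : ℝ) + 1)) * 2) = (2 : ℝ) ^ (-((n : ℝ) + 1) + 1) from
        (Real.rpow_add_one (by norm_num) _).symm]
      congr 1
      ring
    rcases eq_or_lt_of_le hy0 with h0 | h0
    · -- y = 0 : take a small element (n+1)/k of the sumset
      obtain ⟨K, hK⟩ := exists_nat_gt (((n + 1 : ℕ) : ℝ) / δ)
      set k := max K 1 with hk
      have hk1 : 1 ≤ k := le_max_right _ _
      have hkpos : (0 : ℝ) < (k : ℝ) := by exact_mod_cast hk1
      have hKk : ((n + 1 : ℕ) : ℝ) / δ ≤ (k : ℝ) := by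
        refine hK.le.trans ?_
        exact_mod_cast le_max_left K 1
      have hxle : ((n + 1 : ℕ) : ℝ) / (k : ℝ) ≤ δ := by
        rw [div_le_iff₀ hkpos]
        calc ((n + 1 : ℕ) : ℝ) = δ * (((n + 1 : ℕ) : ℝ) / δ) := by field_simp
        _ ≤ δ * k := mul_le_mul_of_nonneg_left hKk hδ0.le
      refine ⟨((n + 1 : ℕ) : ℝ) / (k : ℝ), mem_multiples k hk1 (n + 1), ?_⟩
      rw [← h0, zero_sub, abs_neg, abs_of_nonneg (by positivity)]
      exact hxle
    · -- y > 0 : use claimA and the inductive hypothesis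
      have hy2 : y ^ 2 ≤ ε := by
        rw [← hsq]
        exact pow_le_pow_left₀ hy0 hy1 2
      obtain ⟨k, hk1, hk2, hk3⟩ := claimA ε hε0 y h0 hy2
      obtain ⟨s, hs, hsd⟩ := IH (y - 1 / k) ⟨sub_nonneg.mpr hk2, hk3⟩
      refine ⟨s + 1 / k, Set.add_mem_add hs ⟨k, hk1, rfl⟩, ?_⟩
      have : y - (s + 1 / k) = (y - 1 / k) - s := by ring
      rw [this]
      exact hsd
end

section
/- Let r ∈ (0, 1/2) and let Φ be the iterated function system on [0,1] consisting of φ₁(x) = rx and φ₂(x) = rx + (1-r), with attractor X. Then for any integer k ≥ (1-r)/r, the k-fold iterated sumset kX equals the interval [0,k]. -/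
open Set Metric Filter Pointwise

/-- Let `X` be the attractor of the IFS `{x ↦ rx, x ↦ rx + (1-r)}` with `r ∈ (0,1/2)`.
For any integer `k ≥ (1-r)/r`, the `k`-fold iterated sumset `kX` equals `[0,k]`. -/
theorem stmt4 (r : ℝ) (hr : r ∈ Set.Ioo (0 : ℝ) (1 / 2)) (X : Set ℝ)
    (hX : IsCompact X) (hne : X.Nonempty)
    (hinv : X = (fun x => r * x) '' X ∪ (fun x => r * x + (1 - r)) '' X)
    (k : ℕ) (hk : (1 - r) / r ≤ (k : ℝ)) :
    iterSumset X k = Set.Icc 0 (k : ℝ) := by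
  obtain ⟨hr0, hr2⟩ := hr
  have hr1 : r < 1 := by linarith
  have hz : (0:ℝ) < 1 - r := by linarith
  -- images are contained in X
  have h1 : ∀ x ∈ X, r * x ∈ X := fun x hx => hinv.ge (Or.inl ⟨x, hx, rfl⟩)
  have h2 : ∀ x ∈ X, r * x + (1 - r) ∈ X := fun x hx => hinv.ge (Or.inr ⟨x, hx, rfl⟩)
  -- X ⊆ [0,1]
  have hbdd : BddAbove X := hX.bddAbove
  have hbddb : BddBelow X := hX.bddBelow
  have hb1 : sSup X ≤ 1 := by
    have hbmem : sSup X ∈ X := hX.sSup_mem hne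
    have := hinv.le hbmem
    rcases this with ⟨x, hx, hxe⟩ | ⟨x, hx, hxe⟩ <;> beta_reduce at hxe
    · have hxb : x ≤ sSup X := le_csSup hbdd hx
      nlinarith
    · have hxb : x ≤ sSup X := le_csSup hbdd hx
      nlinarith
  have ha0 : 0 ≤ sInf X := by
    have hamem : sInf X ∈ X := hX.sInf_mem hne
    have := hinv.le hamem
    rcases this with ⟨x, hx, hxe⟩ | ⟨x, hx, hxe⟩ <;> beta_reduce at hxe
    · have hxb : sInf X ≤ x := csInf_le hbddb hx
      nlinarith
    · have hxb : sInf X ≤ x := csInf_le hbddb hx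
      nlinarith
  have hX01 : X ⊆ Set.Icc (0:ℝ) 1 := fun x hx =>
    ⟨ha0.trans (csInf_le hbddb hx), (le_csSup hbdd hx).trans hb1⟩
  -- iterSumset bounded
  have hsub : ∀ n : ℕ, iterSumset X n ⊆ Set.Icc (0:ℝ) n := by
    intro n
    induction n with
    | zero => intro x hx; simp only [iterSumset, Set.mem_singleton_iff] at hx
              simp [hx]
    | succ m ih =>
      intro x hx
      rcases hx with ⟨y, hy, z, hz, rfl⟩
      have hy' := ih hy
      have hz' := hX01 hz
      simp only [Set.mem_Icc]
      push_cast
      exact ⟨by linarith [hy'.1, hz'.1], by linarith [hy'.2, hz'.2]⟩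
  -- iterSumset compact and nonempty
  have hcomp : ∀ n : ℕ, IsCompact (iterSumset X n) := by
    intro n
    induction n with
    | zero => exact isCompact_singleton
    | succ m ih => exact ih.add hX
  have hnon : ∀ n : ℕ, (iterSumset X n).Nonempty := by
    intro n
    induction n with
    | zero => exact ⟨0, rfl⟩
    | succ m ih =>
      obtain ⟨y, hy⟩ := ih
      obtain ⟨z, hz⟩ := hne
      exact ⟨y + z, y, hy, z, hz, rfl⟩
  -- key self-similarity of iterSumset
  have hkey : ∀ n : ℕ, ∀ i : ℕ, i ≤ n → ∀ x ∈ iterSumset X n,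
      r * x + i * (1 - r) ∈ iterSumset X n := by
    intro n
    induction n with
    | zero =>
      intro i hi x hx
      interval_cases i
      simp only [iterSumset, Set.mem_singleton_iff] at hx ⊢
      simp [hx]
    | succ m ih =>
      intro i hi x hx
      rcases hx with ⟨y, hy, z, hz, rfl⟩
      rcases Nat.lt_or_ge i (m + 1) with h | h
      · have hi' : i ≤ m := Nat.lt_succ_iff.mp h
        refine ⟨r * y + i * (1 - r), ih i hi' y hy, r * z, h1 z hz, by ring⟩
      · have hie : i = m + 1 := le_antisymm hi h
        subst hie
        refine ⟨r * y + m * (1 - r), ih m le_rfl y hy, r * z + (1 - r), h2 z hz, ?_⟩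
        push_cast; ring
  have hk' : 1 - r ≤ r * k := by
    rw [div_le_iff₀ hr0] at hk; linarith
  -- one-step decomposition of t ∈ [0,k]
  have hstep : ∀ t ∈ Set.Icc (0:ℝ) k, ∃ i : ℕ, i ≤ k ∧ ∃ t' ∈ Set.Icc (0:ℝ) k,
      t = i * (1 - r) + r * t' := by
    intro t ht
    set i : ℕ := min k ⌊t / (1 - r)⌋₊ with hidef
    have hik : i ≤ k := min_le_left _ _
    have hfl : (i : ℝ) ≤ t / (1 - r) := by
      have : (⌊t / (1 - r)⌋₊ : ℝ) ≤ t / (1 - r) :=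
        Nat.floor_le (div_nonneg ht.1 hz.le)
      have hi2 : (i : ℝ) ≤ (⌊t / (1 - r)⌋₊ : ℝ) := by
        exact_mod_cast min_le_right k _
      linarith
    have hlo : (i : ℝ) * (1 - r) ≤ t := (le_div_iff₀ hz).mp hfl
    have hhi : t - i * (1 - r) ≤ r * k := by
      rcases le_or_gt k ⌊t / (1 - r)⌋₊ with h | h
      · have : i = k := min_eq_left h
        rw [this]
        have := ht.2
        nlinarith
      · have hi2 : i = ⌊t / (1 - r)⌋₊ := min_eq_right h.le
        have hfloor : t / (1 - r) < (⌊t / (1 - r)⌋₊ : ℝ) + 1 :=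
          Nat.lt_floor_add_one _
        have ht' : t < ((i:ℝ) + 1) * (1 - r) := by
          rw [hi2]
          exact (div_lt_iff₀ hz).mp hfloor
        nlinarith
    refine ⟨i, hik, (t - i * (1 - r)) / r, ⟨?_, ?_⟩, ?_⟩
    · exact div_nonneg (by linarith) hr0.le
    · rw [div_le_iff₀ hr0]; linarith
    · field_simp; ring
  -- approximation
  have happrox : ∀ n : ℕ, ∀ t ∈ Set.Icc (0:ℝ) k, ∃ s ∈ iterSumset X k,
      |t - s| ≤ r ^ n * k := by
    intro n
    induction n with
    | zero =>
      intro t ht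
      obtain ⟨s, hs⟩ := hnon k
      have hs' := hsub k hs
      refine ⟨s, hs, ?_⟩
      rw [abs_le, pow_zero, one_mul]
      constructor
      · have := ht.1; have := hs'.2; linarith
      · have := ht.2; have := hs'.1; linarith
    | succ m ih =>
      intro t ht
      obtain ⟨i, hik, t', ht', hte⟩ := hstep t ht
      obtain ⟨s', hs', hle⟩ := ih t' ht'
      refine ⟨r * s' + i * (1 - r), hkey k i hik s' hs', ?_⟩
      have : t - (r * s' + i * (1 - r)) = r * (t' - s') := by
        rw [hte]; ring
      rw [this, abs_mul, abs_of_pos hr0, pow_succ, mul_comm (r^m) r, mul_assoc]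
      exact mul_le_mul_of_nonneg_left hle hr0.le
  have hk1 : (1:ℕ) ≤ k := by
    rcases Nat.eq_zero_or_pos k with h | h
    · exfalso
      rw [h] at hk
      have : (0:ℝ) < (1 - r) / r := div_pos hz hr0
      simp at hk
      linarith
    · exact h
  have hkpos : (0:ℝ) < k := by exact_mod_cast hk1
  refine Set.Subset.antisymm (hsub k) ?_
  intro t ht
  have hclosed : IsClosed (iterSumset X k) := (hcomp k).isClosed
  rw [← hclosed.closure_eq]
  rw [Metric.mem_closure_iff]
  intro ε hε
  obtain ⟨n, hn⟩ := exists_pow_lt_of_lt_one (div_pos hε hkpos) hr1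
  obtain ⟨s, hs, hle⟩ := happrox n t ht
  refine ⟨s, hs, ?_⟩
  rw [Real.dist_eq]
  calc |t - s| ≤ r ^ n * k := hle
  _ < (ε / k) * k := by exact mul_lt_mul_of_pos_right hn hkpos
  _ = ε := by field_simp
end

section
/- Let F ⊆ ℝ be a self-similar set (attractor of a finite IFS of contracting similarities on ℝ) which is not a singleton. Then there exists n ≥ 1 such that the iterated sumset nF contains a nonempty open interval. -/
open Set Metric Filter Pointwise

lemma iterSumset_succ {M : Type*} [AddMonoid M] (F : Set M) (n : ℕ) :
    iterSumset F (n+1) = iterSumset F n + F := rfl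

lemma iterSumset_nonempty (F : Set ℝ) (h : F.Nonempty) (n : ℕ) :
    (iterSumset F n).Nonempty := by
  induction n with
  | zero => exact ⟨0, rfl⟩
  | succ n ih => exact ih.add h

lemma iterSumset_isCompact (F : Set ℝ) (h : IsCompact F) (n : ℕ) :
    IsCompact (iterSumset F n) := by
  induction n with
  | zero => exact isCompact_singleton
  | succ n ih => exact ih.add h

lemma mem_iterSumset_map (F : Set ℝ) (l β₁ β₂ : ℝ)
    (h₁ : ∀ x ∈ F, l * x + β₁ ∈ F) (h₂ : ∀ x ∈ F, l * x + β₂ ∈ F) :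
    ∀ n k j : ℕ, k + j = n → ∀ y ∈ iterSumset F n,
      l * y + k * β₁ + j * β₂ ∈ iterSumset F n := by
  intro n
  induction n with
  | zero =>
    intro k j hkj y hy
    have hk : k = 0 := by omega
    have hj : j = 0 := by omega
    subst hk; subst hj
    simp only [iterSumset, Set.mem_singleton_iff] at hy ⊢
    subst hy; norm_num
  | succ n ih =>
    intro k j hkj y hy
    rw [iterSumset_succ, Set.mem_add] at hy
    obtain ⟨u, hu, x, hx, rfl⟩ := hy
    rw [iterSumset_succ]
    match k with
    | 0 =>
      have hj : j = n + 1 := by omega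
      subst hj
      have heq : l*(u+x) + (0:ℕ)*β₁ + ((n+1 : ℕ):ℝ)*β₂
          = (l*u + (0:ℕ)*β₁ + (n:ℕ)*β₂) + (l*x+β₂) := by push_cast; ring
      rw [heq]
      exact Set.add_mem_add (ih 0 n (by omega) u hu) (h₂ x hx)
    | k+1 =>
      have heq : l*(u+x) + ((k+1:ℕ):ℝ)*β₁ + (j:ℝ)*β₂
          = (l*u + (k:ℕ)*β₁ + (j:ℕ)*β₂) + (l*x+β₁) := by push_cast; ring
      rw [heq]
      exact Set.add_mem_add (ih k j (by omega) u hu) (h₁ x hx)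

lemma interval_subset_aux (Y : Set ℝ) (hcl : IsClosed Y) (y₀ : ℝ) (hy₀ : y₀ ∈ Y)
    (l b c : ℝ) (hl0 : 0 < l) (hl1 : l < 1) (hb : 0 < b) (n : ℕ) (hnpos : 0 < n)
    (hn : 1 - l ≤ l * n)
    (hY : ∀ k : ℕ, k ≤ n → ∀ y ∈ Y, l * y + c + k * b ∈ Y) :
    Set.Icc (c/(1-l)) (c/(1-l) + n*b/(1-l)) ⊆ Y := by
  have h1l : 0 < 1 - l := by linarith
  set h₀ := c/(1-l) with hh₀def
  set L := n*b/(1-l) with hLdef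
  have hh0 : l * h₀ + c = h₀ := by
    rw [hh₀def]
    field_simp
    ring
  have hnpos' : (1:ℝ) ≤ (n:ℝ) := by exact_mod_cast hnpos
  have hLb : b ≤ l * L := by
    rw [hLdef]
    have h' : l * ((n:ℝ)*b/(1-l)) = (l*(n:ℝ)*b)/(1-l) := by ring
    rw [h', le_div_iff₀ h1l]
    nlinarith
  have hLnn : 0 ≤ L := by positivity
  set C := L + |h₀ - y₀| with hCdef
  have hC0 : 0 ≤ C := by positivity
  have main : ∀ m : ℕ, ∀ t ∈ Set.Icc h₀ (h₀ + L), ∃ y ∈ Y, |t - y| ≤ l ^ m * C := by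
    intro m
    induction m with
    | zero =>
      intro t ht
      refine ⟨y₀, hy₀, ?_⟩
      rw [pow_zero, one_mul, hCdef]
      have h1 : |t - h₀| ≤ L := by
        rw [abs_of_nonneg (by linarith [ht.1])]
        linarith [ht.2]
      calc |t - y₀| ≤ |t - h₀| + |h₀ - y₀| := abs_sub_le t h₀ y₀
        _ ≤ L + |h₀ - y₀| := by linarith
    | succ m ih =>
      intro t ht
      set k : ℕ := min n ⌊(t - h₀)/b⌋₊ with hk
      have hkn : k ≤ n := min_le_left _ _
      have hlow : h₀ + k * b ≤ t := by
        have h1 : (k:ℝ) ≤ (t - h₀)/b := by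
          have h2 : (k:ℝ) ≤ (⌊(t-h₀)/b⌋₊ : ℝ) := by
            exact_mod_cast min_le_right n _
          refine h2.trans (Nat.floor_le (div_nonneg (by linarith [ht.1]) hb.le))
        rw [le_div_iff₀ hb] at h1
        linarith
      have hup : t ≤ l*(h₀+L) + c + k * b := by
        by_cases hbig : n ≤ ⌊(t - h₀)/b⌋₊
        · have hkn' : k = n := by omega
          rw [hkn']
          have hLeq : L * (1 - l) = n * b := by
            rw [hLdef]; field_simp
          have := ht.2
          nlinarith
        · have hkf : k = ⌊(t - h₀)/b⌋₊ := by omega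
          have h3 : (t - h₀)/b < (⌊(t - h₀)/b⌋₊ : ℝ) + 1 := Nat.lt_floor_add_one _
          have h4 : t - h₀ < ((k:ℝ) + 1) * b := by
            rw [hkf]
            calc t - h₀ = (t - h₀)/b * b := by field_simp
              _ < ((⌊(t - h₀)/b⌋₊:ℝ) + 1) * b := by
                  apply mul_lt_mul_of_pos_right h3 hb
          nlinarith
      set s := (t - c - k*b)/l with hs
      have hsmem : s ∈ Set.Icc h₀ (h₀ + L) := by
        constructor
        · rw [hs, le_div_iff₀ hl0]
          nlinarith [hlow]
        · rw [hs, div_le_iff₀ hl0]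
          nlinarith [hup]
      obtain ⟨y', hy', hdist⟩ := ih s hsmem
      refine ⟨l*y' + c + k*b, hY k hkn y' hy', ?_⟩
      have heq : t - (l*y'+c+(k:ℝ)*b) = l*(s - y') := by
        rw [hs]; field_simp; ring
      rw [heq, abs_mul, abs_of_pos hl0, pow_succ]
      calc l * |s - y'| ≤ l * (l^m * C) := by
            apply mul_le_mul_of_nonneg_left hdist hl0.le
        _ = l ^ m * l * C := by ring
  intro t ht
  have hcls : t ∈ closure Y := by
    rw [Metric.mem_closure_iff]
    intro ε hε
    obtain ⟨m, hm⟩ := exists_pow_lt_of_lt_one (show (0:ℝ) < ε/(C+1) by positivity) hl1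
    obtain ⟨y, hy, hd⟩ := main m t ht
    refine ⟨y, hy, ?_⟩
    have hlt : l^m * C < ε := by
      calc l^m * C ≤ l^m * (C+1) := by
            apply mul_le_mul_of_nonneg_left (by linarith) (by positivity)
        _ < ε/(C+1) * (C+1) := by
            apply mul_lt_mul_of_pos_right hm (by positivity)
        _ = ε := by field_simp
    calc dist t y = |t - y| := by rw [Real.dist_eq]
      _ ≤ l^m * C := hd
      _ < ε := hlt
  rwa [hcl.closure_eq] at hcls

/-- If `F ⊆ ℝ` is a self-similar set (attractor of a finite IFS of contracting
similarities on `ℝ`) which is not a singleton, then some iterated sumset `nF`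
contains a nonempty open interval. -/
theorem stmt5 (F : Set ℝ) (ι : Type) [Fintype ι] [Nonempty ι]
    (a b : ι → ℝ) (ha : ∀ i, 0 < |a i| ∧ |a i| < 1)
    (hF : IsCompact F) (hne : F.Nonempty)
    (hinv : F = ⋃ i, (fun x => a i * x + b i) '' F)
    (hns : ¬ ∃ x : ℝ, F = {x}) :
    ∃ n : ℕ, 1 ≤ n ∧ ∃ c d : ℝ, c < d ∧ Set.Ioo c d ⊆ iterSumset F n := by
  have ha0 : ∀ i, a i ≠ 0 := fun i => abs_pos.mp (ha i).1
  have ha1 : ∀ i, a i < 1 := fun i => (abs_lt.mp (ha i).2).2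
  have ha1' : ∀ i, -1 < a i := fun i => (abs_lt.mp (ha i).2).1
  have hsub : ∀ i, ∀ x ∈ F, a i * x + b i ∈ F := by
    intro i x hx
    rw [hinv]
    exact Set.mem_iUnion.mpr ⟨i, ⟨x, hx, rfl⟩⟩
  have hp : ∃ i j : ι, b i / (1 - a i) ≠ b j / (1 - a j) := by
    by_contra h
    push_neg at h
    apply hns
    obtain ⟨i₀⟩ := (inferInstance : Nonempty ι)
    set p := b i₀ / (1 - a i₀) with hpdef
    have hfix : ∀ i, a i * p + b i = p := by
      intro i
      have h1 : (1 - a i) ≠ 0 := by have := ha1 i; intro hc; linarith [sub_eq_zero.mp hc]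
      have h2 : b i / (1 - a i) = p := h i i₀
      have h3 : b i = p * (1 - a i) := by
        field_simp at h2
        linarith [h2]
      rw [h3]; ring
    refine ⟨p, ?_⟩
    have hcont : ContinuousOn (fun x => |x - p|) F :=
      (continuous_abs.comp (continuous_sub_right p)).continuousOn
    obtain ⟨x, hxF, hmax⟩ := hF.exists_isMaxOn hne hcont
    have hle : ∀ y ∈ F, |y - p| ≤ |x - p| := fun y hy => hmax hy
    have hx0 : |x - p| ≤ 0 := by
      by_contra h0
      push_neg at h0
      have hxU : x ∈ ⋃ i, (fun x => a i * x + b i) '' F := hinv ▸ hxF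
      obtain ⟨i, y, hyF, hxy⟩ := by simpa using hxU
      have heq : |x - p| = |a i| * |y - p| := by
        rw [← hxy, ← abs_mul]
        congr 1
        linear_combination hfix i
      have h2 : |y - p| ≤ |x - p| := hle y hyF
      have e1 : |a i| * |y - p| ≤ |a i| * |x - p| :=
        mul_le_mul_of_nonneg_left h2 (abs_nonneg _)
      have e2 : |a i| * |x - p| < 1 * |x - p| :=
        mul_lt_mul_of_pos_right (ha i).2 h0
      linarith
    have hFsub : F ⊆ {p} := by
      intro z hz
      have : |z - p| ≤ 0 := le_trans (hle z hz) hx0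
      have : z = p := by
        have := abs_nonneg (z - p)
        have hz0 : |z - p| = 0 := le_antisymm ‹|z - p| ≤ 0› this
        have := abs_eq_zero.mp hz0
        linarith
      exact this
    exact hne.subset_singleton_iff.mp hFsub
  obtain ⟨i, j, hij⟩ := hp
  -- the two composed similarities  G₁ = fᵢ∘f_j∘fᵢ∘f_j,  G₂ = f_j∘fᵢ∘f_j∘fᵢ
  set α := a i * a j with hα
  set l := α ^ 2 with hldef
  set γ₁ := a i * b j + b i with hγ₁
  set γ₂ := a j * b i + b j with hγ₂
  set β₁ := α * γ₁ + γ₁ with hβ₁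
  set β₂ := α * γ₂ + γ₂ with hβ₂
  have hαabs : |α| < 1 := by
    rw [hα, abs_mul]
    nlinarith [abs_nonneg (a i), abs_nonneg (a j), (ha i).2, (ha j).2]
  have hα1 : -1 < α := (abs_lt.mp hαabs).1
  have hα1' : α < 1 := (abs_lt.mp hαabs).2
  have hα0 : α ≠ 0 := mul_ne_zero (ha0 i) (ha0 j)
  have hl0 : 0 < l := by rw [hldef]; positivity
  have hl1 : l < 1 := by
    rw [hldef]
    nlinarith [hα1, hα1']
  have hG₁ : ∀ x ∈ F, l * x + β₁ ∈ F := by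
    intro x hx
    have h4 := hsub i _ (hsub j _ (hsub i _ (hsub j x hx)))
    have heq : l * x + β₁
        = a i * (a j * (a i * (a j * x + b j) + b i) + b j) + b i := by
      rw [hldef, hβ₁, hγ₁, hα]; ring
    rw [heq]; exact h4
  have hG₂ : ∀ x ∈ F, l * x + β₂ ∈ F := by
    intro x hx
    have h4 := hsub j _ (hsub i _ (hsub j _ (hsub i x hx)))
    have heq : l * x + β₂
        = a j * (a i * (a j * (a i * x + b i) + b j) + b i) + b j := by
      rw [hldef, hβ₂, hγ₂, hα]; ring
    rw [heq]; exact h4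
  have hβne : β₁ ≠ β₂ := by
    intro hcontra
    apply hij
    have h1α : (1:ℝ) + α ≠ 0 := by intro hc; linarith
    have hγeq : γ₁ = γ₂ := by
      have : (1 + α) * γ₁ = (1 + α) * γ₂ := by
        rw [hβ₁, hβ₂] at hcontra; linarith
      exact mul_left_cancel₀ h1α this
    have hai : (1 - a i) ≠ 0 := by have := ha1 i; intro hc; linarith [sub_eq_zero.mp hc]
    have haj : (1 - a j) ≠ 0 := by have := ha1 j; intro hc; linarith [sub_eq_zero.mp hc]
    rw [div_eq_div_iff hai haj]
    rw [hγ₁, hγ₂] at hγeq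
    linear_combination hγeq
  -- orient so that the second translation is smaller
  obtain ⟨B₁, B₂, hB₁, hB₂, hBlt⟩ :
      ∃ B₁ B₂ : ℝ, (∀ x ∈ F, l * x + B₁ ∈ F) ∧ (∀ x ∈ F, l * x + B₂ ∈ F) ∧ B₂ < B₁ := by
    rcases hβne.lt_or_gt with h | h
    · exact ⟨β₂, β₁, hG₂, hG₁, h⟩
    · exact ⟨β₁, β₂, hG₁, hG₂, h⟩
  set bb := B₁ - B₂ with hbb
  have hbbpos : 0 < bb := by rw [hbb]; linarith
  -- choose n
  set n := ⌈1 / l⌉₊ with hn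
  have hnpos : 0 < n := by
    rw [hn]
    exact Nat.ceil_pos.mpr (by positivity)
  have hnbig : 1 / l ≤ (n : ℝ) := Nat.le_ceil _
  have hln : 1 - l ≤ l * n := by
    rw [div_le_iff₀ hl0] at hnbig
    nlinarith
  set Y := iterSumset F n with hY
  have hYne : Y.Nonempty := iterSumset_nonempty F hne n
  obtain ⟨y₀, hy₀⟩ := hYne
  have hYcl : IsClosed Y := (iterSumset_isCompact F hF n).isClosed
  set cc := (n : ℝ) * B₂ with hcc
  have hmap : ∀ k : ℕ, k ≤ n → ∀ y ∈ Y, l * y + cc + k * bb ∈ Y := by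
    intro k hk y hy
    have h1 := mem_iterSumset_map F l B₁ B₂ hB₁ hB₂ n k (n - k) (by omega) y hy
    have heq : l * y + cc + (k:ℝ) * bb = l * y + (k:ℝ) * B₁ + ((n - k : ℕ):ℝ) * B₂ := by
      rw [hcc, hbb]
      rw [Nat.cast_sub hk]
      ring
    rw [heq]
    exact h1
  have hIcc := interval_subset_aux Y hYcl y₀ hy₀ l bb cc hl0 hl1 hbbpos n hnpos hln hmap
  refine ⟨n, hnpos, cc/(1-l), cc/(1-l) + n*bb/(1-l), ?_, ?_⟩
  · have h1l : 0 < 1 - l := by linarith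
    have : 0 < (n:ℝ) * bb / (1-l) := by
      have : (0:ℝ) < (n:ℝ) := by exact_mod_cast hnpos
      positivity
    linarith
  · exact fun t ht => hIcc (Set.Ioo_subset_Icc_self ht)
end

section
/- Let r ∈ (0,1/2), k ∈ ℕ, and X be the attractor of the IFS {x ↦ rx, x ↦ rx + (1-r)} on [0,1]. Then the k-fold sumset kX is the attractor of the IFS consisting of the k+1 maps x ↦ rx + n(1-r) for n = 0, 1, ..., k, acting on [0,k]. -/
open Set Metric Filter Pointwise

/-- Let `X` be the attractor of `{x ↦ rx, x ↦ rx + (1-r)}` with `r ∈ (0,1/2)`. Then the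
`k`-fold sumset `kX` is the attractor of the IFS of the `k+1` maps `x ↦ rx + n(1-r)`,
`n = 0,…,k`; i.e. it is the (unique) nonempty compact set invariant under these maps. -/
theorem stmt6 (r : ℝ) (hr : r ∈ Set.Ioo (0 : ℝ) (1 / 2)) (k : ℕ) (X : Set ℝ)
    (hX : IsCompact X) (hne : X.Nonempty)
    (hinv : X = (fun x => r * x) '' X ∪ (fun x => r * x + (1 - r)) '' X) :
    IsCompact (iterSumset X k) ∧ (iterSumset X k).Nonempty ∧
      iterSumset X k =
        ⋃ n ∈ Finset.range (k + 1), (fun x => r * x + (n : ℝ) * (1 - r)) '' iterSumset X k := by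

  refine ⟨?_, ?_, ?_⟩
  · induction k with
    | zero => exact isCompact_singleton
    | succ k ih => exact ih.add hX
  · induction k with
    | zero => exact Set.singleton_nonempty 0
    | succ k ih => exact ih.add hne
  · induction k with
    | zero =>
      ext y
      simp [iterSumset]
    | succ k ih =>
      ext y
      simp only [Finset.mem_range, Set.mem_iUnion, Set.mem_image]
      constructor
      · intro hy
        obtain ⟨a, ha, b, hb, rfl⟩ := Set.mem_add.mp hy
        have ha' := ih ▸ ha
        simp only [Finset.mem_range, Set.mem_iUnion, Set.mem_image] at ha'
        obtain ⟨n, hn, a', ha', rfl⟩ := ha'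
        have hb' := hinv ▸ hb
        rcases hb' with ⟨b', hb', rfl⟩ | ⟨b', hb', rfl⟩
        · refine ⟨n, by omega, a' + b', Set.add_mem_add ha' hb', by ring⟩
        · refine ⟨n + 1, by omega, a' + b', Set.add_mem_add ha' hb', by push_cast; ring⟩
      · rintro ⟨n, hn, c, hc, rfl⟩
        obtain ⟨a, ha, b, hb, rfl⟩ := Set.mem_add.mp hc
        rcases Nat.lt_or_ge n (k + 1) with h | h
        · have haa : r * a + (n : ℝ) * (1 - r) ∈ iterSumset X k := by
            rw [ih]
            simp only [Finset.mem_range, Set.mem_iUnion, Set.mem_image]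
            exact ⟨n, h, a, ha, rfl⟩
          have hbb : r * b ∈ X := by
            rw [hinv]; exact Or.inl ⟨b, hb, rfl⟩
          have := Set.add_mem_add haa hbb
          convert this using 1
          exacts [rfl, by ring]
        · have hnk : n = k + 1 := by omega
          subst hnk
          have haa : r * a + (k : ℝ) * (1 - r) ∈ iterSumset X k := by
            rw [ih]
            simp only [Finset.mem_range, Set.mem_iUnion, Set.mem_image]
            exact ⟨k, by omega, a, ha, rfl⟩
          have hbb : r * b + (1 - r) ∈ X := by
            rw [hinv]; exact Or.inr ⟨b, hb, rfl⟩
          have := Set.add_mem_add haa hbb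
          convert this using 1
          exacts [rfl, by push_cast; ring]
end

section
/- For any F ⊆ ℝ^d, the upper box dimension of the distance set satisfies dim̄_B D(F) ≥ dim̄_B(F) / d. -/
open Set Metric Filter Pointwise

set_option maxHeartbeats 1000000
open scoped RealInnerProductSpace

section CoverAPI

variable {X : Type*} [PseudoMetricSpace X]

lemma coverNum_le_of_cover {E : Set X} {r : ℝ} (S : Finset X)
    (h : E ⊆ ⋃ x ∈ S, Metric.ball x r) : coverNum E r ≤ S.card :=
  Nat.sInf_le ⟨S, rfl, h⟩

lemma coverNum_empty (r : ℝ) : coverNum (∅ : Set X) r = 0 :=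
  Nat.le_zero.mp (by simpa using coverNum_le_of_cover (E := (∅ : Set X)) (r := r) ∅ (by simp))

lemma exists_cover_coverNum {E : Set X} {r : ℝ}
    (h : ∃ S : Finset X, E ⊆ ⋃ x ∈ S, Metric.ball x r) :
    ∃ S : Finset X, S.card = coverNum E r ∧ E ⊆ ⋃ x ∈ S, Metric.ball x r := by
  have hne : {n : ℕ | ∃ S : Finset X, S.card = n ∧ E ⊆ ⋃ x ∈ S, Metric.ball x r}.Nonempty := by
    obtain ⟨S, hS⟩ := h; exact ⟨S.card, S, rfl, hS⟩
  exact Nat.sInf_mem hne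

lemma coverNum_pos {E : Set X} {r : ℝ} (hE : E.Nonempty)
    (h : ∃ S : Finset X, E ⊆ ⋃ x ∈ S, Metric.ball x r) : 1 ≤ coverNum E r := by
  obtain ⟨S, hcard, hcov⟩ := exists_cover_coverNum h
  rcases Nat.eq_zero_or_pos (coverNum E r) with h0 | h1
  · exfalso
    rw [h0] at hcard
    obtain ⟨x, hx⟩ := hE
    have := hcov hx
    rw [Finset.card_eq_zero.mp hcard] at this
    simpa using this
  · exact h1

lemma coverNum_union_le (A B : Set X) (r : ℝ) :
    coverNum (A ∪ B) r ≤ coverNum A r + coverNum B r := by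
  classical
  by_cases hA : ∃ S : Finset X, A ⊆ ⋃ x ∈ S, Metric.ball x r
  · by_cases hB : ∃ S : Finset X, B ⊆ ⋃ x ∈ S, Metric.ball x r
    · obtain ⟨SA, hSA, hcovA⟩ := exists_cover_coverNum hA
      obtain ⟨SB, hSB, hcovB⟩ := exists_cover_coverNum hB
      calc coverNum (A ∪ B) r ≤ (SA ∪ SB).card := by
            apply coverNum_le_of_cover
            intro x hx
            rcases hx with hx | hx
            · obtain ⟨s, hs⟩ := mem_iUnion.mp (hcovA hx)
              simp only [mem_iUnion, exists_prop] at hs ⊢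
              exact ⟨s, Finset.mem_union_left _ hs.1, hs.2⟩
            · obtain ⟨s, hs⟩ := mem_iUnion.mp (hcovB hx)
              simp only [mem_iUnion, exists_prop] at hs ⊢
              exact ⟨s, Finset.mem_union_right _ hs.1, hs.2⟩
        _ ≤ SA.card + SB.card := Finset.card_union_le _ _
        _ = coverNum A r + coverNum B r := by rw [hSA, hSB]
    · have : ¬ ∃ S : Finset X, (A ∪ B) ⊆ ⋃ x ∈ S, Metric.ball x r := by
        rintro ⟨S, hS⟩
        exact hB ⟨S, fun x hx => hS (Or.inr hx)⟩
      have hempty : {n : ℕ | ∃ S : Finset X, S.card = n ∧ (A ∪ B) ⊆ ⋃ x ∈ S, Metric.ball x r} = ∅ := by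
        ext n; simp only [mem_setOf_eq, mem_empty_iff_false, iff_false]
        rintro ⟨S, -, hS⟩; exact this ⟨S, hS⟩
      rw [coverNum, hempty, Nat.sInf_empty]
      exact Nat.zero_le _
  · have : ¬ ∃ S : Finset X, (A ∪ B) ⊆ ⋃ x ∈ S, Metric.ball x r := by
      rintro ⟨S, hS⟩
      exact hA ⟨S, fun x hx => hS (Or.inl hx)⟩
    have hempty : {n : ℕ | ∃ S : Finset X, S.card = n ∧ (A ∪ B) ⊆ ⋃ x ∈ S, Metric.ball x r} = ∅ := by
      ext n; simp only [mem_setOf_eq, mem_empty_iff_false, iff_false]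
      rintro ⟨S, -, hS⟩; exact this ⟨S, hS⟩
    rw [coverNum, hempty, Nat.sInf_empty]
    exact Nat.zero_le _

lemma coverNum_mono_set {A B : Set X} {r : ℝ} (hAB : A ⊆ B)
    (h : ∃ S : Finset X, B ⊆ ⋃ x ∈ S, Metric.ball x r) :
    coverNum A r ≤ coverNum B r := by
  obtain ⟨S, hcard, hcov⟩ := exists_cover_coverNum h
  rw [← hcard]
  exact coverNum_le_of_cover S (hAB.trans hcov)

lemma coverNum_biUnion_le {ι : Type*} (S : Finset ι) (G : ι → Set X) (r : ℝ) :
    coverNum (⋃ i ∈ S, G i) r ≤ ∑ i ∈ S, coverNum (G i) r := by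
  classical
  induction S using Finset.induction with
  | empty => simp [coverNum_empty]
  | insert _ _ hi ih =>
    rename_i a s
    rw [Finset.set_biUnion_insert, Finset.sum_insert hi]
    exact (coverNum_union_le _ _ _).trans (Nat.add_le_add_left ih _)

end CoverAPI

section Covers
variable {X : Type*} [NormedAddCommGroup X] [NormedSpace ℝ X] [FiniteDimensional ℝ X]

lemma exists_finite_cover_of_isBounded {F : Set X} (hF : Bornology.IsBounded F) {r : ℝ}
    (hr : 0 < r) : ∃ S : Finset X, F ⊆ ⋃ x ∈ S, Metric.ball x r := by
  classical
  obtain ⟨R, hR⟩ := hF.subset_closedBall (0 : X)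
  obtain ⟨t, hts, htf, htcov⟩ := (isCompact_closedBall (0 : X) R).finite_cover_balls (e := r) hr
  refine ⟨htf.toFinset, hR.trans (htcov.trans ?_)⟩
  intro x hx
  simp only [mem_iUnion, exists_prop] at hx ⊢
  obtain ⟨c, hc, hxc⟩ := hx
  exact ⟨c, htf.mem_toFinset.mpr hc, hxc⟩

end Covers

section Grid

/-- grid covering of a set inside `Icc a b` by `⌊(b-a)/r⌋+1` intervals -/
lemma coverNum_of_subset_Icc {G : Set ℝ} {a b r : ℝ} (hr : 0 < r) (hab : a ≤ b)
    (h : G ⊆ Icc a b) : coverNum G r ≤ ⌊(b - a)/r⌋₊ + 1 := by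
  classical
  set n := ⌊(b - a)/r⌋₊
  have hcov : G ⊆ ⋃ c ∈ (Finset.range (n+1)).image (fun j : ℕ => a + j * r), Metric.ball c r := by
    intro x hx
    obtain ⟨hx1, hx2⟩ := h hx
    set j := ⌊(x - a)/r⌋₊ with hj
    have hxa : 0 ≤ x - a := by linarith
    have hjn : j ≤ n := Nat.floor_mono (by gcongr <;> linarith)
    have h1 : (j : ℝ) * r ≤ x - a := by
      have := Nat.floor_le (div_nonneg hxa hr.le)
      calc (j:ℝ) * r ≤ ((x-a)/r) * r := by nlinarith
      _ = x - a := by field_simp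
    have h2 : x - a < (j + 1 : ℝ) * r := by
      have := Nat.lt_floor_add_one ((x - a)/r)
      calc x - a = ((x-a)/r) * r := by field_simp
      _ < (j+1 : ℝ) * r := by push_cast; nlinarith
    simp only [mem_iUnion, exists_prop, Finset.mem_image, Finset.mem_range]
    refine ⟨a + j * r, ⟨j, by omega, rfl⟩, ?_⟩
    rw [mem_ball, Real.dist_eq]
    rw [abs_lt]; constructor <;> nlinarith
  calc coverNum G r ≤ _ := coverNum_le_of_cover _ hcov
    _ ≤ (Finset.range (n+1)).card := Finset.card_image_le
    _ = n + 1 := by simp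

end Grid

section Doubling
variable {d : ℕ}
local notation "EE" => EuclideanSpace ℝ (Fin d)

lemma exists_doubling (Λ : ℝ) :
    ∃ Q : ℕ, ∀ (w : EE) (r : ℝ), 0 < r → ∀ F : Set EE, F ⊆ Metric.ball w (Λ * r) →
      coverNum F r ≤ Q := by
  classical
  obtain ⟨t, _, htf, htcov⟩ :=
    (isCompact_closedBall (0 : EE) Λ).finite_cover_balls (e := 1) one_pos
  refine ⟨htf.toFinset.card, fun w r hr F hF => ?_⟩
  have hcov : F ⊆ ⋃ c ∈ htf.toFinset.image (fun c : EE => w + r • c), Metric.ball c r := by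
    intro x hx
    have hxb : ‖x - w‖ < Λ * r := by
      have := hF hx; rwa [mem_ball, dist_eq_norm] at this
    set ξ : EE := r⁻¹ • (x - w) with hξ
    have hξb : ξ ∈ Metric.closedBall (0 : EE) Λ := by
      rw [mem_closedBall, dist_zero_right, hξ, norm_smul, norm_inv, Real.norm_of_nonneg hr.le]
      rw [inv_mul_le_iff₀ hr, mul_comm]
      exact hxb.le
    obtain ⟨c, hc, hξc⟩ : ∃ c ∈ t, ξ ∈ Metric.ball c 1 := by
      have := htcov hξb
      simpa only [mem_iUnion, exists_prop] using this
    simp only [mem_iUnion, exists_prop, Finset.mem_image]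
    refine ⟨w + r • c, ⟨c, htf.mem_toFinset.mpr hc, rfl⟩, ?_⟩
    rw [mem_ball, dist_eq_norm]
    have : x - (w + r • c) = r • (ξ - c) := by
      rw [smul_sub, hξ, smul_smul, mul_inv_cancel₀ hr.ne', one_smul]; abel
    rw [this, norm_smul, Real.norm_of_nonneg hr.le]
    have : ‖ξ - c‖ < 1 := by rw [mem_ball, dist_eq_norm] at hξc; exact hξc
    nlinarith
  exact (coverNum_le_of_cover _ hcov).trans Finset.card_image_le

end Doubling

section DistSet
variable {X : Type*} [PseudoMetricSpace X]

lemma distSet_mono {F G : Set X} (h : F ⊆ G) : distSet F ⊆ distSet G := by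
  rintro s ⟨x, hx, y, hy, rfl⟩; exact ⟨x, h hx, y, h hy, rfl⟩

lemma distSet_subset_Icc {K : Set X} (hK : Bornology.IsBounded K) :
    distSet K ⊆ Icc 0 (Metric.diam K) := by
  rintro s ⟨x, hx, y, hy, rfl⟩
  exact ⟨dist_nonneg, Metric.dist_le_diam_of_mem hK hx hy⟩

lemma distSet_isBounded {K : Set X} (hK : Bornology.IsBounded K) :
    Bornology.IsBounded (distSet K) :=
  (Metric.isBounded_Icc 0 (Metric.diam K)).subset (distSet_subset_Icc hK)

lemma distSet_nonempty {K : Set X} (hK : K.Nonempty) : (distSet K).Nonempty := by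
  obtain ⟨x, hx⟩ := hK; exact ⟨0, x, hx, x, hx, dist_self x⟩

end DistSet

section Geometry
variable {d : ℕ}
local notation "EE" => EuclideanSpace ℝ (Fin d)

/-- The orthogonal projection, as an ambient vector. -/
noncomputable def pV (V : Submodule ℝ (EuclideanSpace ℝ (Fin d))) (y : EuclideanSpace ℝ (Fin d)) :
    EuclideanSpace ℝ (Fin d) := (Submodule.orthogonalProjectionOnto V y : EuclideanSpace ℝ (Fin d))

/-- Points within `δ` of the sphere of radius `ρ` centered at `z` inside the affine
subspace through `z` with direction `V` (formulated via projections). -/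
def NearSet (V : Submodule ℝ (EuclideanSpace ℝ (Fin d))) (z : EuclideanSpace ℝ (Fin d))
    (ρ δ : ℝ) : Set (EuclideanSpace ℝ (Fin d)) :=
  {x | ‖x - z - pV V (x - z)‖ ≤ δ ∧ |‖pV V (x - z)‖ - ρ| ≤ δ}

lemma aux_sq_bound {q t : ℝ} (hq0 : 0 ≤ q) (hqt : q ≤ (39/40)*t) :
    ((11/50)*t)^2 ≤ t^2 - q^2 := by nlinarith [mul_self_le_mul_self hq0 hqt]

lemma aux_sq_bound' {q t : ℝ} (hq0 : 0 ≤ q) (hqt : q ≤ (39/40)*t) :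
    0 ≤ t^2 - q^2 := by nlinarith [mul_self_le_mul_self hq0 hqt]

lemma aux_sq_le {τ ρ : ℝ} (h0 : 0 ≤ τ) (h2 : τ ≤ 2*ρ) : τ^2 ≤ 4*ρ^2 := by nlinarith

lemma near_data {V : Submodule ℝ EE} {z : EE} {ρ δ : ℝ} {x : EE}
    (hδ : 0 < δ) (hρ : 100*δ < ρ) (hx : x ∈ NearSet V z ρ δ) :
    ∃ v : EE, v ∈ V ∧ (x - z - v) ∈ Vᗮ ∧ ‖x - z - v‖ ≤ δ ∧ |‖v‖ - ρ| ≤ δ ∧ 0 < ‖v‖ ∧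
      ‖(ρ/‖v‖) • v‖ = ρ ∧ ‖(x - z) - (ρ/‖v‖) • v‖ ≤ 2*δ := by
  obtain ⟨hn, hv⟩ := hx
  have hρ0 : (0:ℝ) < ρ := by linarith
  have hv1 : ρ - δ ≤ ‖pV V (x - z)‖ := by
    have := abs_le.mp hv; linarith [this.1]
  have hvpos : 0 < ‖pV V (x - z)‖ := by linarith
  refine ⟨pV V (x - z), (Submodule.orthogonalProjectionOnto V (x - z)).2,
    Submodule.sub_starProjection_mem_orthogonal (K := V) (x - z), hn, hv, hvpos, ?_, ?_⟩
  · rw [norm_smul, Real.norm_of_nonneg (by positivity)]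
    field_simp
  · have hdecomp : (x - z) - (ρ/‖pV V (x - z)‖) • pV V (x - z)
        = (x - z - pV V (x - z)) + (1 - ρ/‖pV V (x - z)‖) • pV V (x - z) := by
      rw [sub_smul, one_smul]; abel
    rw [hdecomp]
    have h8 : |1 - ρ/‖pV V (x - z)‖| = |‖pV V (x - z)‖ - ρ| / ‖pV V (x - z)‖ := by
      rw [show (1 - ρ/‖pV V (x - z)‖) = (‖pV V (x - z)‖ - ρ)/‖pV V (x - z)‖ by field_simp,
        abs_div, abs_of_pos hvpos]
    have h2 : ‖(1 - ρ/‖pV V (x - z)‖) • pV V (x - z)‖ = |‖pV V (x - z)‖ - ρ| := by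
      rw [norm_smul, Real.norm_eq_abs, h8, div_mul_cancel₀ _ hvpos.ne']
    calc ‖(x - z - pV V (x - z)) + (1 - ρ/‖pV V (x - z)‖) • pV V (x - z)‖
        ≤ ‖x - z - pV V (x - z)‖ + ‖(1 - ρ/‖pV V (x - z)‖) • pV V (x - z)‖ := norm_add_le _ _
      _ ≤ δ + δ := by rw [h2]; exact add_le_add hn hv
      _ = 2*δ := by ring

/-- Main geometric lemma: a thin transversal annulus (pinned at `y₀` near the sphere)
intersected with the `δ`-neighborhood of a sphere is contained in a neighborhood of a
sphere of one lower dimension. -/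
lemma lemA {V : Submodule ℝ EE} {z y₀ : EE} {ρ δ t : ℝ}
    (hδ : 0 < δ) (hρ : 100*δ < ρ) (ht1 : 60*δ ≤ t) (ht2 : t ≤ (39/20)*ρ)
    (hy : y₀ ∈ NearSet V z ρ δ) :
    ∃ (V' : Submodule ℝ (EuclideanSpace ℝ (Fin d))) (z' : EuclideanSpace ℝ (Fin d)) (ρ' : ℝ),
      V' < V ∧
      ∀ x ∈ NearSet V z ρ δ, |‖x - y₀‖ - t| ≤ δ → x ∈ NearSet V' z' ρ' (60*δ) := by
  have hρ0 : (0:ℝ) < ρ := by linarith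
  have ht0 : (0:ℝ) < t := by linarith
  -- unit vector towards y₀
  obtain ⟨e, he1, heV, hyynear⟩ : ∃ e : EE, ‖e‖ = 1 ∧ e ∈ V ∧ ‖(y₀ - z) - ρ • e‖ ≤ 2*δ := by
    obtain ⟨u, huV, -, -, -, hupos, hunorm, hunear⟩ := near_data hδ hρ hy
    refine ⟨‖u‖⁻¹ • u, ?_, Submodule.smul_mem _ _ huV, ?_⟩
    · rw [norm_smul, Real.norm_eq_abs, abs_of_pos (by positivity)]; field_simp
    · have hre : ρ • (‖u‖⁻¹ • u) = (ρ/‖u‖) • u := by rw [smul_smul, div_eq_mul_inv]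
      rw [hre]; exact hunear
  have hyynorm' : ‖ρ • e‖ = ρ := by
    rw [norm_smul, Real.norm_eq_abs, abs_of_pos hρ0, he1, mul_one]
  -- scalar data
  obtain ⟨q, hq, hq0, hqt⟩ : ∃ q : ℝ, 2*ρ*q = t^2 ∧ 0 ≤ q ∧ q ≤ (39/40)*t := by
    refine ⟨t^2/(2*ρ), by field_simp, by positivity, ?_⟩
    have h1 : 2*ρ*(t^2/(2*ρ)) ≤ 2*ρ*((39/40)*t) := by
      rw [show 2*ρ*(t^2/(2*ρ)) = t^2 by field_simp]
      calc t^2 = t*t := pow_two t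
        _ ≤ t*((39/20)*ρ) := mul_le_mul_of_nonneg_left ht2 ht0.le
        _ = 2*ρ*((39/40)*t) := by ring
    exact (mul_le_mul_iff_right₀ (by linarith : (0:ℝ) < 2*ρ)).mp h1
  obtain ⟨ρ', hρ'sq, hρ'0, hρ'lb⟩ : ∃ ρ' : ℝ, ρ'^2 = t^2 - q^2 ∧ 0 ≤ ρ' ∧ (11/50)*t ≤ ρ' := by
    refine ⟨Real.sqrt (t^2 - q^2),
      Real.sq_sqrt (aux_sq_bound' hq0 hqt), Real.sqrt_nonneg _, ?_⟩
    rw [show (11/50)*t = Real.sqrt (((11/50)*t)^2) from (Real.sqrt_sq (by positivity)).symm]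
    exact Real.sqrt_le_sqrt (aux_sq_bound hq0 hqt)
  have hV'V : V ⊓ (ℝ ∙ e)ᗮ < V := by
    apply lt_of_le_of_ne inf_le_left
    intro hEq
    have heV' : e ∈ V ⊓ (ℝ ∙ e)ᗮ := by rw [hEq]; exact heV
    have h0 : ⟪e, e⟫ = 0 :=
      Submodule.mem_orthogonal_singleton_iff_inner_right.mp (Submodule.mem_inf.mp heV').2
    rw [real_inner_self_eq_norm_sq, he1] at h0
    norm_num at h0
  refine ⟨V ⊓ (ℝ ∙ e)ᗮ, z + (ρ - q) • e, ρ', hV'V, ?_⟩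
  intro x hx hxt
  obtain ⟨v, hvV, hvorth, hn, hv, hvpos, hxn, hxnear⟩ := near_data hδ hρ hx
  obtain ⟨xx, hxxdef, hxxnorm, hxxnear⟩ :
      ∃ xx : EE, xx = (ρ/‖v‖) • v ∧ ‖xx‖ = ρ ∧ ‖(x - z) - xx‖ ≤ 2*δ := ⟨_, rfl, hxn, hxnear⟩
  obtain ⟨a', ha'def⟩ : ∃ a' : ℝ, a' = ⟪xx, e⟫ := ⟨_, rfl⟩
  obtain ⟨τ, hτdef⟩ : ∃ τ : ℝ, τ = ‖xx - ρ • e‖ := ⟨_, rfl⟩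
  have hτ0 : 0 ≤ τ := hτdef ▸ norm_nonneg _
  have hτ2ρ : τ ≤ 2*ρ := by
    rw [hτdef]
    calc ‖xx - ρ • e‖ ≤ ‖xx‖ + ‖ρ • e‖ := norm_sub_le _ _
      _ = 2*ρ := by rw [hxxnorm, hyynorm']; ring
  have hτd : |τ - ‖x - y₀‖| ≤ 4*δ := by
    have hkey : ‖(xx - ρ • e) - (x - y₀)‖ ≤ 4*δ := by
      have hre : (xx - ρ • e) - (x - y₀) = -(((x - z) - xx) - ((y₀ - z) - ρ • e)) := by abel
      rw [hre, norm_neg]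
      calc ‖((x - z) - xx) - ((y₀ - z) - ρ • e)‖
          ≤ ‖(x - z) - xx‖ + ‖(y₀ - z) - ρ • e‖ := norm_sub_le _ _
        _ ≤ 2*δ + 2*δ := add_le_add hxxnear hyynear
        _ = 4*δ := by ring
    rw [hτdef]
    calc |‖xx - ρ • e‖ - ‖x - y₀‖| ≤ ‖(xx - ρ • e) - (x - y₀)‖ := abs_norm_sub_norm_le _ _
      _ ≤ 4*δ := hkey
  have hτt : |τ - t| ≤ 5*δ := by
    have h1 := abs_le.mp hτd
    have h2 := abs_le.mp hxt
    rw [abs_le]; constructor <;> linarith [h1.1, h1.2, h2.1, h2.2]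
  -- chord identity
  have hkey1 : τ^2 = 2*ρ^2 - 2*ρ*a' := by
    have h0 := norm_sub_sq_real xx (ρ • e)
    rw [hxxnorm, hyynorm', real_inner_smul_right, ← ha'def, ← hτdef] at h0
    linarith [h0]
  have hq' : 2*ρ*(ρ - a') = τ^2 := by linarith [hkey1]
  -- |a' - (ρ - q)| ≤ 11 δ
  have htτ : t + τ ≤ (21/10)*t := by
    have := abs_le.mp hτt
    linarith [this.2]
  have htτ' : |t - τ| ≤ 5*δ := by rw [abs_sub_comm]; exact hτt
  have habs : |t^2 - τ^2| ≤ (21/2)*δ*t := by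
    have h1 : |t^2 - τ^2| = |t - τ| * (t + τ) := by
      rw [← abs_of_nonneg (by linarith : (0:ℝ) ≤ t + τ), ← abs_mul]
      congr 1; ring
    rw [h1]
    calc |t - τ| * (t + τ) ≤ (5*δ) * ((21/10)*t) :=
          mul_le_mul htτ' htτ (by linarith) (by positivity)
      _ = (21/2)*δ*t := by ring
  have ha'cs : |a' - (ρ - q)| ≤ 11*δ := by
    have h1 : 2*ρ*(a' - (ρ - q)) = t^2 - τ^2 := by linear_combination hq + hkey1
    have h2 : 2*ρ*|a' - (ρ - q)| = |t^2 - τ^2| := by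
      rw [← abs_of_pos (by linarith : (0:ℝ) < 2*ρ), ← abs_mul, h1]
    have h4 : 2*ρ*|a' - (ρ - q)| ≤ 2*ρ*((819/80)*δ) := by
      rw [h2]
      calc |t^2 - τ^2| ≤ (21/2)*δ*t := habs
        _ ≤ (21/2)*δ*((39/20)*ρ) := mul_le_mul_of_nonneg_left ht2 (by positivity)
        _ = 2*ρ*((819/80)*δ) := by ring
    have h5 := (mul_le_mul_iff_right₀ (by linarith : (0:ℝ) < 2*ρ)).mp h4
    linarith [h5]
  -- w' and its norm
  obtain ⟨w', hw'def⟩ : ∃ w' : EE, w' = xx - a' • e := ⟨_, rfl⟩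
  have hw'e : ⟪w', e⟫ = 0 := by
    rw [hw'def, inner_sub_left, real_inner_smul_left, real_inner_self_eq_norm_sq, he1, ha'def]
    ring
  have hw'sq : ‖w'‖^2 = ρ^2 - a'^2 := by
    have hxxw : xx = w' + a' • e := by rw [hw'def]; abel
    have h0 := norm_add_sq_real w' (a' • e)
    rw [← hxxw, hxxnorm, real_inner_smul_right, hw'e, mul_zero, norm_smul, Real.norm_eq_abs,
      he1, mul_one, sq_abs] at h0
    linarith [h0]
  have hw'0 : 0 ≤ ‖w'‖ := norm_nonneg _
  -- |‖w'‖ - ρ'| ≤ 48 δ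
  have hdiff : |‖w'‖ - ρ'| ≤ 48*δ := by
    have h1 : 4*ρ^2*(ρ^2 - a'^2) = τ^2 * (4*ρ^2 - τ^2) := by
      linear_combination (2*ρ*(ρ + a') - τ^2) * hq'
    have h2 : 4*ρ^2*(t^2 - q^2) = t^2 * (4*ρ^2 - t^2) := by
      linear_combination (-(t^2 + 2*ρ*q)) * hq
    have e3 : 4*ρ^2*(‖w'‖^2 - ρ'^2) = (τ^2 - t^2)*(4*ρ^2 - (τ^2 + t^2)) := by
      rw [hw'sq, hρ'sq]
      linear_combination h1 - h2
    have hτsq : τ^2 ≤ 4*ρ^2 := aux_sq_le hτ0 hτ2ρ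
    have htsq : t^2 ≤ 4*ρ^2 := aux_sq_le ht0.le (by linarith)
    have h4 : |4*ρ^2 - (τ^2 + t^2)| ≤ 4*ρ^2 := by
      rw [abs_le]
      constructor <;> [linarith [sq_nonneg τ, sq_nonneg t]; linarith [sq_nonneg τ, sq_nonneg t]]
    have h5 : (4*ρ^2) * |‖w'‖^2 - ρ'^2| = |τ^2 - t^2| * |4*ρ^2 - (τ^2 + t^2)| := by
      have hcc := congrArg abs e3
      rw [abs_mul (4*ρ^2) (‖w'‖^2 - ρ'^2), abs_mul (τ^2 - t^2) (4*ρ^2 - (τ^2 + t^2)),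
        abs_of_pos (show (0:ℝ) < 4*ρ^2 by positivity)] at hcc
      exact hcc
    have habs2 : |‖w'‖^2 - ρ'^2| ≤ |τ^2 - t^2| := by
      have hYZ : |τ^2 - t^2| * |4*ρ^2 - (τ^2 + t^2)| ≤ |τ^2 - t^2| * (4*ρ^2) :=
        mul_le_mul_of_nonneg_left h4 (abs_nonneg _)
      have h6' : (4*ρ^2) * |‖w'‖^2 - ρ'^2| ≤ (4*ρ^2) * |τ^2 - t^2| := by
        rw [h5]; linarith [hYZ]
      exact (mul_le_mul_iff_right₀ (by positivity : (0:ℝ) < 4*ρ^2)).mp h6'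
    have h6 : |‖w'‖ - ρ'| * (‖w'‖ + ρ') = |‖w'‖^2 - ρ'^2| := by
      rw [← abs_of_nonneg (by linarith : (0:ℝ) ≤ ‖w'‖ + ρ'), ← abs_mul]
      congr 1; ring
    have h7 : |‖w'‖ - ρ'| * ((11/50)*t) ≤ (21/2)*δ*t := by
      calc |‖w'‖ - ρ'| * ((11/50)*t) ≤ |‖w'‖ - ρ'| * (‖w'‖ + ρ') :=
            mul_le_mul_of_nonneg_left (by linarith) (abs_nonneg _)
        _ = |‖w'‖^2 - ρ'^2| := h6
        _ ≤ |τ^2 - t^2| := habs2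
        _ = |t^2 - τ^2| := abs_sub_comm _ _
        _ ≤ (21/2)*δ*t := habs
    have h8' : ((11/50)*t) * |‖w'‖ - ρ'| ≤ ((11/50)*t) * ((525/11)*δ) := by
      calc ((11/50)*t) * |‖w'‖ - ρ'| = |‖w'‖ - ρ'| * ((11/50)*t) := by ring
        _ ≤ (21/2)*δ*t := h7
        _ = ((11/50)*t) * ((525/11)*δ) := by ring
    have h9' := (mul_le_mul_iff_right₀ (by positivity : (0:ℝ) < (11/50)*t)).mp h8'
    linarith [h9']
  -- descend to unnormalized w
  obtain ⟨a, hadef⟩ : ∃ a : ℝ, a = ⟪v, e⟫ := ⟨_, rfl⟩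
  have ha' : a' = (ρ/‖v‖) * a := by rw [ha'def, hxxdef, real_inner_smul_left, hadef]
  obtain ⟨w, hwdef⟩ : ∃ w : EE, w = v - a • e := ⟨_, rfl⟩
  have hww' : w' = (ρ/‖v‖) • w := by
    rw [hw'def, hwdef, hxxdef, ha', smul_sub, smul_smul]
  have hwe : ⟪w, e⟫ = 0 := by
    rw [hwdef, inner_sub_left, real_inner_smul_left, real_inner_self_eq_norm_sq, he1, hadef]
    ring
  have hwsq : ‖v‖^2 = ‖w‖^2 + a^2 := by
    have hvw : v = w + a • e := by rw [hwdef]; abel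
    have h0 := norm_add_sq_real w (a • e)
    rw [← hvw, real_inner_smul_right, hwe, mul_zero, norm_smul, Real.norm_eq_abs,
      he1, mul_one, sq_abs] at h0
    linarith [h0]
  have hwv : ‖w‖ ≤ ‖v‖ := by
    have h0 : ‖w‖^2 ≤ ‖v‖^2 := by linarith [sq_nonneg a]
    exact (pow_le_pow_iff_left₀ (norm_nonneg w) (norm_nonneg v) (by norm_num)).mp h0
  have h8 : |1 - ρ/‖v‖| = |‖v‖ - ρ| / ‖v‖ := by
    rw [show (1 - ρ/‖v‖) = (‖v‖ - ρ)/‖v‖ by field_simp, abs_div, abs_of_pos hvpos]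
  have hww : ‖w - w'‖ ≤ δ := by
    have hwrite : w - w' = (1 - ρ/‖v‖) • w := by rw [hww', sub_smul, one_smul]
    rw [hwrite, norm_smul, Real.norm_eq_abs, h8]
    calc |‖v‖ - ρ| / ‖v‖ * ‖w‖ ≤ |‖v‖ - ρ| / ‖v‖ * ‖v‖ :=
          mul_le_mul_of_nonneg_left hwv (by positivity)
      _ = |‖v‖ - ρ| := by field_simp
      _ ≤ δ := hv
  have hwρ' : |‖w‖ - ρ'| ≤ 49*δ := by
    have h9 : |‖w‖ - ‖w'‖| ≤ δ := (abs_norm_sub_norm_le _ _).trans hww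
    have h9' := abs_le.mp h9; have h10 := abs_le.mp hdiff
    rw [abs_le]; constructor <;> linarith [h9'.1, h9'.2, h10.1, h10.2]
  have haa' : |a - a'| ≤ δ := by
    have hab : |a| ≤ ‖v‖ := by
      rw [hadef]
      calc |⟪v, e⟫| ≤ ‖v‖ * ‖e‖ := abs_real_inner_le_norm _ _
        _ = ‖v‖ := by rw [he1, mul_one]
    have h11 : a - a' = (1 - ρ/‖v‖) * a := by rw [ha']; ring
    rw [h11, abs_mul, h8]
    calc |‖v‖ - ρ| / ‖v‖ * |a| ≤ |‖v‖ - ρ| / ‖v‖ * ‖v‖ :=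
          mul_le_mul_of_nonneg_left hab (by positivity)
      _ = |‖v‖ - ρ| := by field_simp
      _ ≤ δ := hv
  have hacs : |a - (ρ - q)| ≤ 12*δ := by
    have h12 := abs_le.mp haa'; have h13 := abs_le.mp ha'cs
    rw [abs_le]; constructor <;> linarith [h12.1, h12.2, h13.1, h13.2]
  -- membership of w in V'
  have hwV' : w ∈ V ⊓ (ℝ ∙ e)ᗮ := by
    rw [Submodule.mem_inf]
    refine ⟨by rw [hwdef]; exact Submodule.sub_mem _ hvV (Submodule.smul_mem _ _ heV), ?_⟩
    rw [Submodule.mem_orthogonal_singleton_iff_inner_right, real_inner_comm]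
    exact hwe
  -- projection onto V' equals w
  have hdecomp2 : (x - (z + (ρ - q) • e)) - w = (x - z - v) + (a - (ρ - q)) • e := by
    rw [hwdef]; module
  have hproj : pV (V ⊓ (ℝ ∙ e)ᗮ) (x - (z + (ρ - q) • e)) = w := by
    apply Submodule.eq_starProjection_of_mem_of_inner_eq_zero hwV'
    intro yw hyw
    rw [hdecomp2, inner_add_left, real_inner_smul_left]
    have hywV : yw ∈ V := (Submodule.mem_inf.mp hyw).1
    have hn_orth : ⟪x - z - v, yw⟫ = 0 := by
      rw [real_inner_comm]
      exact (Submodule.mem_orthogonal V _).mp hvorth yw hywV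
    have he_orth : ⟪e, yw⟫ = 0 :=
      Submodule.mem_orthogonal_singleton_iff_inner_right.mp (Submodule.mem_inf.mp hyw).2
    rw [hn_orth, he_orth]; ring
  -- conclude
  refine ⟨?_, ?_⟩
  · rw [hproj, hdecomp2]
    calc ‖(x - z - v) + (a - (ρ - q)) • e‖
        ≤ ‖x - z - v‖ + ‖(a - (ρ - q)) • e‖ := norm_add_le _ _
      _ ≤ δ + 12*δ := by
          refine add_le_add hn ?_
          rw [norm_smul, Real.norm_eq_abs, he1, mul_one]
          exact hacs
      _ ≤ 60*δ := by linarith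
  · rw [hproj]
    have h14 := abs_le.mp hwρ'
    rw [abs_le]; constructor <;> linarith [h14.1, h14.2]

lemma auxC1 {τ ρ : ℝ} (h : (37/20)*ρ ≤ τ) (hρ : 0 ≤ ρ) : (1369/400)*ρ^2 ≤ τ^2 := by nlinarith

lemma auxC3 {x y c : ℝ} (hx : 0 ≤ x) (hy : 0 ≤ y) (hx2 : x^2 ≤ c) (hy2 : y^2 ≤ c) :
    x*y ≤ c := by nlinarith [sq_nonneg (x - y)]

lemma auxC2 {a b ρ : ℝ} (h₁ : a ≤ -(569/800)*ρ) (h₂ : b ≤ -(569/800)*ρ) (hρ : 0 ≤ ρ) :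
    (323761/640000)*ρ^2 ≤ a*b := by nlinarith

lemma auxC4 {a ρ : ℝ} (h : a ≤ -(569/800)*ρ) (hρ : 0 ≤ ρ) :
    (323761/640000)*ρ^2 ≤ a^2 := by nlinarith

lemma near_unit {V : Submodule ℝ EE} {z y₀ : EE} {ρ δ : ℝ}
    (hδ : 0 < δ) (hρ : 100*δ < ρ) (hy : y₀ ∈ NearSet V z ρ δ) :
    ∃ e : EE, ‖e‖ = 1 ∧ e ∈ V ∧ ‖(y₀ - z) - ρ • e‖ ≤ 2*δ := by
  obtain ⟨u, huV, -, -, -, hupos, hunorm, hunear⟩ := near_data hδ hρ hy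
  refine ⟨‖u‖⁻¹ • u, ?_, Submodule.smul_mem _ _ huV, ?_⟩
  · rw [norm_smul, Real.norm_eq_abs, abs_of_pos (by positivity)]; field_simp
  · have hre : ρ • (‖u‖⁻¹ • u) = (ρ/‖u‖) • u := by rw [smul_smul, div_eq_mul_inv]
    rw [hre]; exact hunear

/-- Cap diameter lemma: points of the `δ`-neighborhood of the sphere that are at distance
`≥ 1.9ρ - δ` from `y₀` are mutually within distance `1.5ρ`. -/
lemma lemCap {V : Submodule ℝ EE} {z y₀ : EE} {ρ δ : ℝ}
    (hδ : 0 < δ) (hρ : 100*δ < ρ) (hy : y₀ ∈ NearSet V z ρ δ)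
    {x₁ x₂ : EE} (h₁ : x₁ ∈ NearSet V z ρ δ) (h₂ : x₂ ∈ NearSet V z ρ δ)
    (hd₁ : (19/10)*ρ - δ ≤ ‖x₁ - y₀‖) (hd₂ : (19/10)*ρ - δ ≤ ‖x₂ - y₀‖) :
    ‖x₁ - x₂‖ ≤ (3/2)*ρ := by
  have hρ0 : (0:ℝ) < ρ := by linarith
  obtain ⟨e, he1, heV, hyynear⟩ := near_unit hδ hρ hy
  have hyynorm' : ‖ρ • e‖ = ρ := by
    rw [norm_smul, Real.norm_eq_abs, abs_of_pos hρ0, he1, mul_one]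
  have hee : ⟪e, e⟫ = (1:ℝ) := by
    rw [real_inner_self_eq_norm_sq, he1]; norm_num
  -- per-point data
  have key : ∀ x : EE, x ∈ NearSet V z ρ δ → (19/10)*ρ - δ ≤ ‖x - y₀‖ →
      ∃ xx : EE, ‖xx‖ = ρ ∧ ‖(x - z) - xx‖ ≤ 2*δ ∧ ⟪xx, e⟫ ≤ -(569/800)*ρ := by
    intro x hx hdx
    obtain ⟨v, -, -, -, -, hvpos, hxn, hxnear⟩ := near_data hδ hρ hx
    obtain ⟨xx, hxxdef, hxxnorm, hxxnear⟩ :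
        ∃ xx : EE, xx = (ρ/‖v‖) • v ∧ ‖xx‖ = ρ ∧ ‖(x - z) - xx‖ ≤ 2*δ :=
      ⟨(ρ/‖v‖) • v, rfl, hxn, hxnear⟩
    refine ⟨xx, hxxnorm, hxxnear, ?_⟩
    obtain ⟨a', ha'def⟩ : ∃ a' : ℝ, a' = ⟪xx, e⟫ := ⟨_, rfl⟩
    suffices h : a' ≤ -(569/800)*ρ by rw [ha'def] at h; exact h
    obtain ⟨τ, hτdef⟩ : ∃ τ : ℝ, τ = ‖xx - ρ • e‖ := ⟨_, rfl⟩
    have hτd : |τ - ‖x - y₀‖| ≤ 4*δ := by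
      have hkey : ‖(xx - ρ • e) - (x - y₀)‖ ≤ 4*δ := by
        have hre : (xx - ρ • e) - (x - y₀) = -(((x - z) - xx) - ((y₀ - z) - ρ • e)) := by abel
        rw [hre, norm_neg]
        calc ‖((x - z) - xx) - ((y₀ - z) - ρ • e)‖
            ≤ ‖(x - z) - xx‖ + ‖(y₀ - z) - ρ • e‖ := norm_sub_le _ _
          _ ≤ 2*δ + 2*δ := add_le_add hxxnear hyynear
          _ = 4*δ := by ring
      rw [hτdef]
      calc |‖xx - ρ • e‖ - ‖x - y₀‖| ≤ ‖(xx - ρ • e) - (x - y₀)‖ := abs_norm_sub_norm_le _ _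
        _ ≤ 4*δ := hkey
    have hτlb : (37/20)*ρ ≤ τ := by
      have := abs_le.mp hτd
      have h5δ : 5*δ ≤ (1/20)*ρ := by linarith
      linarith [this.1]
    have hkey1 : τ^2 = 2*ρ^2 - 2*ρ*a' := by
      have h0 := norm_sub_sq_real xx (ρ • e)
      rw [hxxnorm, hyynorm', real_inner_smul_right, ← ha'def, ← hτdef] at h0
      linarith [h0]
    have hτsq := auxC1 hτlb hρ0.le
    have h6 : 2*ρ*a' ≤ 2*ρ*(-(569/800)*ρ) := by
      have : 2*ρ*a' = 2*ρ^2 - τ^2 := by linarith [hkey1]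
      rw [this]
      calc 2*ρ^2 - τ^2 ≤ 2*ρ^2 - (1369/400)*ρ^2 := by linarith [hτsq]
        _ = 2*ρ*(-(569/800)*ρ) := by ring
    exact (mul_le_mul_iff_right₀ (by linarith : (0:ℝ) < 2*ρ)).mp h6
  obtain ⟨xx₁, hn₁, hnear₁, ha₁⟩ := key x₁ h₁ hd₁
  obtain ⟨xx₂, hn₂, hnear₂, ha₂⟩ := key x₂ h₂ hd₂
  obtain ⟨a₁, ha₁def⟩ : ∃ a : ℝ, a = ⟪xx₁, e⟫ := ⟨_, rfl⟩
  obtain ⟨a₂, ha₂def⟩ : ∃ a : ℝ, a = ⟪xx₂, e⟫ := ⟨_, rfl⟩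
  rw [← ha₁def] at ha₁; rw [← ha₂def] at ha₂
  obtain ⟨w₁, hw₁def⟩ : ∃ w : EE, w = xx₁ - a₁ • e := ⟨_, rfl⟩
  obtain ⟨w₂, hw₂def⟩ : ∃ w : EE, w = xx₂ - a₂ • e := ⟨_, rfl⟩
  have hwe₁ : ⟪w₁, e⟫ = 0 := by
    rw [hw₁def, inner_sub_left, real_inner_smul_left, hee, ha₁def]; ring
  have hwe₂ : ⟪w₂, e⟫ = 0 := by
    rw [hw₂def, inner_sub_left, real_inner_smul_left, hee, ha₂def]; ring
  have hwsq : ∀ (w : EE) (a : ℝ) (xx : EE), w = xx - a • e → ‖xx‖ = ρ → ⟪w, e⟫ = 0 →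
      ‖w‖^2 = ρ^2 - a^2 := by
    intro w a xx hwdef hxxnorm hwe
    have hxxw : xx = w + a • e := by rw [hwdef]; abel
    have h0 := norm_add_sq_real w (a • e)
    rw [← hxxw, hxxnorm, real_inner_smul_right, hwe, mul_zero, norm_smul, Real.norm_eq_abs,
      he1, mul_one, sq_abs] at h0
    linarith [h0]
  have hw₁sq := hwsq w₁ a₁ xx₁ hw₁def hn₁ hwe₁
  have hw₂sq := hwsq w₂ a₂ xx₂ hw₂def hn₂ hwe₂
  -- inner product bound
  have hinner : ⟪xx₁, xx₂⟫ = ⟪w₁, w₂⟫ + a₁*a₂ := by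
    have hxx₁ : xx₁ = w₁ + a₁ • e := by rw [hw₁def]; abel
    have hxx₂ : xx₂ = w₂ + a₂ • e := by rw [hw₂def]; abel
    have hew₂ : ⟪e, w₂⟫ = (0:ℝ) := by rw [real_inner_comm]; exact hwe₂
    simp only [hxx₁, hxx₂, inner_add_left, inner_add_right, real_inner_smul_left,
      real_inner_smul_right, hwe₁, hew₂, hee]
    ring
  have ha₁a₂ := auxC2 ha₁ ha₂ hρ0.le
  have hw₁w₂ : ⟪w₁, w₂⟫ ≥ -((4942/10000)*ρ^2) := by
    have hc₁ : ‖w₁‖^2 ≤ (4942/10000)*ρ^2 := by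
      linarith [auxC4 ha₁ hρ0.le, hw₁sq, sq_nonneg ρ]
    have hc₂ : ‖w₂‖^2 ≤ (4942/10000)*ρ^2 := by
      linarith [auxC4 ha₂ hρ0.le, hw₂sq, sq_nonneg ρ]
    have hprod : ‖w₁‖*‖w₂‖ ≤ (4942/10000)*ρ^2 :=
      auxC3 (norm_nonneg _) (norm_nonneg _) hc₁ hc₂
    linarith [neg_abs_le (⟪w₁, w₂⟫ : ℝ), abs_real_inner_le_norm w₁ w₂]
  have hinner_lb : (0:ℝ) ≤ ⟪xx₁, xx₂⟫ := by
    rw [hinner]; linarith [ha₁a₂, hw₁w₂, sq_nonneg ρ]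
  -- distance between normalized points
  have hsq : ‖xx₁ - xx₂‖^2 ≤ 2*ρ^2 := by
    have h0 := norm_sub_sq_real xx₁ xx₂
    rw [hn₁, hn₂] at h0
    linarith [h0, hinner_lb]
  have hn12 : ‖xx₁ - xx₂‖ ≤ (1415/1000)*ρ := by
    have h0 : ‖xx₁ - xx₂‖^2 ≤ ((1415/1000)*ρ)^2 := by
      calc ‖xx₁ - xx₂‖^2 ≤ 2*ρ^2 := hsq
        _ ≤ ((1415/1000)*ρ)^2 := by nlinarith [sq_nonneg ρ]
    exact (pow_le_pow_iff_left₀ (norm_nonneg _) (by positivity) (by norm_num)).mp h0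
  have hdecomp : x₁ - x₂ = ((x₁ - z) - xx₁) + (xx₁ - xx₂) - ((x₂ - z) - xx₂) := by abel
  calc ‖x₁ - x₂‖ = ‖((x₁ - z) - xx₁) + (xx₁ - xx₂) - ((x₂ - z) - xx₂)‖ := by rw [← hdecomp]
    _ ≤ ‖((x₁ - z) - xx₁) + (xx₁ - xx₂)‖ + ‖(x₂ - z) - xx₂‖ := norm_sub_le _ _
    _ ≤ ‖(x₁ - z) - xx₁‖ + ‖xx₁ - xx₂‖ + ‖(x₂ - z) - xx₂‖ := by
        linarith [norm_add_le ((x₁ - z) - xx₁) (xx₁ - xx₂)]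
    _ ≤ 2*δ + (1415/1000)*ρ + 2*δ := by linarith [hnear₁, hnear₂, hn12]
    _ ≤ (3/2)*ρ := by linarith


end Geometry

section Induction
variable {d : ℕ}
local notation "EE" => EuclideanSpace ℝ (Fin d)

lemma near_norm_le {V : Submodule ℝ EE} {z : EE} {ρ δ : ℝ} {x : EE}
    (hx : x ∈ NearSet V z ρ δ) : ‖x - z‖ ≤ ρ + 2*δ := by
  obtain ⟨hn, hv⟩ := hx
  have h1 := abs_le.mp hv
  calc ‖x - z‖ ≤ ‖x - z - pV V (x - z)‖ + ‖pV V (x - z)‖ := by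
        have h0 := norm_add_le (x - z - pV V (x - z)) (pV V (x - z))
        rwa [sub_add_cancel] at h0
    _ ≤ ρ + 2*δ := by linarith [h1.2]

lemma mem_nearSet_top {y₀ x : EE} {c r : ℝ} (h : |dist x y₀ - c| ≤ r) :
    x ∈ NearSet ⊤ y₀ c r := by
  have hproj : pV (⊤ : Submodule ℝ EE) (x - y₀) = x - y₀ :=
    Submodule.starProjection_eq_self_iff.mpr trivial
  constructor
  · rw [hproj, sub_self, norm_zero]
    exact le_trans (abs_nonneg _) h
  · rw [hproj, ← dist_eq_norm]
    exact h

/-- The main inductive covering bound. -/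
lemma coverP : ∀ k : ℕ, ∃ C : ℕ, 0 < C ∧ ∀ (V : Submodule ℝ EE) (z : EE) (ρ δ r : ℝ)
    (F : Set EE) (S : Finset ℝ), 0 < r → r ≤ δ → δ * 60^k ≤ 60^d * r →
    Module.finrank ℝ V ≤ k + 1 → F ⊆ NearSet V z ρ δ →
    distSet F ⊆ ⋃ c ∈ S, Metric.ball c r →
    coverNum F r ≤ C * (S.card + 1)^k := by
  classical
  obtain ⟨Q, hQ⟩ := exists_doubling (d := d) (200*(60:ℝ)^d)
  have hpow_pos : ∀ m k : ℕ, 0 < (m + 1)^k := fun m k => pow_pos (Nat.succ_pos m) k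
  -- generic ball-case bound
  have hball : ∀ (w : EE) (ρ₁ r : ℝ) (F : Set EE), 0 < r →
      (∀ x ∈ F, ‖x - w‖ ≤ ρ₁) → ρ₁ ≤ 103*(60:ℝ)^d*r → coverNum F r ≤ Q := by
    intro w ρ₁ r F hr hF hρ₁
    refine hQ w r hr F ?_
    intro x hx
    rw [mem_ball, dist_eq_norm]
    have h60 : (0:ℝ) < (60:ℝ)^d * r := by positivity
    calc ‖x - w‖ ≤ ρ₁ := hF x hx
      _ ≤ 103*(60:ℝ)^d*r := hρ₁
      _ < 200*(60:ℝ)^d*r := by nlinarith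
  intro k
  induction k with
  | zero =>
    refine ⟨2*Q + 1, by omega, ?_⟩
    intro V z ρ δ r F S hr hrδ hδd hfV hfr hDS
    have hδ0 : (0:ℝ) < δ := lt_of_lt_of_le hr hrδ
    have hδd' : δ ≤ (60:ℝ)^d * r := by simpa using hδd
    simp only [pow_zero, mul_one]
    by_cases hρ : ρ ≤ 100*δ
    · -- small sphere: single ball
      have : coverNum F r ≤ Q := by
        refine hball z (102*δ) r F hr (fun x hx => ?_) ?_
        · have := near_norm_le (hfr hx); linarith
        · have h1 : (1:ℝ) ≤ (60:ℝ)^d := one_le_pow₀ (by norm_num : (1:ℝ) ≤ 60)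
          nlinarith
      omega
    · push_neg at hρ
      rcases Set.eq_empty_or_nonempty F with hFe | hFne
      · rw [hFe, coverNum_empty]; omega
      obtain ⟨y₀, hy₀⟩ := hFne
      obtain ⟨e, he1, heV, hyynear⟩ := near_unit hδ0 hρ (hfr hy₀)
      have he0 : e ≠ 0 := by
        intro h; rw [h, norm_zero] at he1; norm_num at he1
      have hVe : V = ℝ ∙ e := by
        refine (Submodule.eq_of_le_of_finrank_le ((Submodule.span_singleton_le_iff_mem e V).mpr heV) ?_).symm
        rw [finrank_span_singleton he0]
        simpa using hfV
      -- F is contained in two balls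
      have hcover : F ⊆ Metric.ball (z + ρ • e) (3*δ) ∪ Metric.ball (z - ρ • e) (3*δ) := by
        intro x hx
        obtain ⟨hn, hv⟩ := hfr hx
        have hvV : pV V (x - z) ∈ ℝ ∙ e := by
          rw [← hVe]; exact (Submodule.orthogonalProjectionOnto V (x - z)).2
        rw [Submodule.mem_span_singleton] at hvV
        obtain ⟨c, hc⟩ := hvV
        have hnormv : ‖pV V (x - z)‖ = |c| := by
          rw [← hc, norm_smul, Real.norm_eq_abs, he1, mul_one]
        have habs := abs_le.mp hv
        rcases le_or_gt 0 c with hc0 | hc0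
        · left
          rw [mem_ball, dist_eq_norm]
          have hxz : x - (z + ρ • e) = (x - z - pV V (x - z)) + (c - ρ) • e := by
            rw [← hc, sub_smul]; abel
          rw [hxz]
          calc ‖(x - z - pV V (x - z)) + (c - ρ) • e‖
              ≤ ‖x - z - pV V (x - z)‖ + ‖(c - ρ) • e‖ := norm_add_le _ _
            _ = ‖x - z - pV V (x - z)‖ + |c - ρ| := by
                rw [norm_smul, Real.norm_eq_abs, he1, mul_one]
            _ < 3*δ := by
                have : |c - ρ| ≤ δ := by
                  rw [hnormv, abs_of_nonneg hc0] at habs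
                  rw [abs_le]; constructor <;> linarith [habs.1, habs.2]
                linarith [hn]
        · right
          rw [mem_ball, dist_eq_norm]
          have hxz : x - (z - ρ • e) = (x - z - pV V (x - z)) + (c + ρ) • e := by
            rw [← hc, add_smul]; abel
          rw [hxz]
          calc ‖(x - z - pV V (x - z)) + (c + ρ) • e‖
              ≤ ‖x - z - pV V (x - z)‖ + ‖(c + ρ) • e‖ := norm_add_le _ _
            _ = ‖x - z - pV V (x - z)‖ + |c + ρ| := by
                rw [norm_smul, Real.norm_eq_abs, he1, mul_one]
            _ < 3*δ := by
                have : |c + ρ| ≤ δ := by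
                  rw [hnormv, abs_of_neg hc0] at habs
                  rw [abs_le]; constructor <;> linarith [habs.1, habs.2]
                linarith [hn]
      have hFeq : F = (F ∩ Metric.ball (z + ρ • e) (3*δ)) ∪ (F ∩ Metric.ball (z - ρ • e) (3*δ)) := by
        apply Subset.antisymm
        · intro x hx
          rcases hcover hx with h | h
          · exact Or.inl ⟨hx, h⟩
          · exact Or.inr ⟨hx, h⟩
        · rintro x (⟨h, -⟩ | ⟨h, -⟩) <;> exact h
      have hb : ∀ w : EE, coverNum (F ∩ Metric.ball w (3*δ)) r ≤ Q := by
        intro w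
        refine hball w (3*δ) r _ hr (fun x hx => ?_) ?_
        · have := hx.2; rw [mem_ball, dist_eq_norm] at this; linarith
        · have h1 : (1:ℝ) ≤ (60:ℝ)^d := one_le_pow₀ (by norm_num : (1:ℝ) ≤ 60)
          nlinarith
      calc coverNum F r
          = coverNum ((F ∩ Metric.ball (z + ρ • e) (3*δ)) ∪ (F ∩ Metric.ball (z - ρ • e) (3*δ))) r :=
            congrArg (fun s => coverNum s r) hFeq
        _ ≤ coverNum (F ∩ Metric.ball (z + ρ • e) (3*δ)) r
            + coverNum (F ∩ Metric.ball (z - ρ • e) (3*δ)) r := coverNum_union_le _ _ _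
        _ ≤ Q + Q := add_le_add (hb _) (hb _)
        _ ≤ 2*Q + 1 := by omega
  | succ k ih =>
    obtain ⟨C, hC, IH⟩ := ih
    refine ⟨2*(C + Q) + 1, by omega, ?_⟩
    intro V z ρ δ r F S hr hrδ hδd hfV hfr hDS
    have hδ0 : (0:ℝ) < δ := lt_of_lt_of_le hr hrδ
    have hδd' : δ ≤ (60:ℝ)^d * r := by
      have h1 : δ * 1 ≤ δ * 60^(k+1) := by
        apply mul_le_mul_of_nonneg_left _ hδ0.le
        exact one_le_pow₀ (by norm_num : (1:ℝ) ≤ 60)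
      simpa using h1.trans hδd
    have hM1 : 0 < (S.card + 1)^k := hpow_pos _ _
    -- the "max" piece bound
    have hQle : Q ≤ (C + Q) * (S.card + 1)^k := by
      calc Q ≤ (C + Q) * 1 := by omega
        _ ≤ (C + Q) * (S.card + 1)^k := Nat.mul_le_mul_left _ hM1
    have hCle : C * (S.card + 1)^k ≤ (C + Q) * (S.card + 1)^k :=
      Nat.mul_le_mul_right _ (by omega)
    by_cases hρ : ρ ≤ 100*δ
    · have hsmall : coverNum F r ≤ Q := by
        refine hball z (102*δ) r F hr (fun x hx => ?_) ?_
        · have := near_norm_le (hfr hx); linarith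
        · have h1 : (1:ℝ) ≤ (60:ℝ)^d := one_le_pow₀ (by norm_num : (1:ℝ) ≤ 60)
          nlinarith
      calc coverNum F r ≤ Q := hsmall
        _ ≤ (2*(C + Q) + 1) * 1 := by omega
        _ ≤ (2*(C + Q) + 1) * (S.card + 1)^(k+1) := Nat.mul_le_mul_left _ (hpow_pos _ _)
    · push_neg at hρ
      rcases Set.eq_empty_or_nonempty F with hFe | hFne
      · rw [hFe, coverNum_empty]; omega
      obtain ⟨y₀, hy₀⟩ := hFne
      have hy₀N := hfr hy₀
      -- generic bound for an annulus piece pinned at a point of F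
      have hpiece : ∀ (y : EE), y ∈ F → ∀ c : ℝ, c ≤ (39/20)*ρ →
          ∀ (G : Set EE), G ⊆ F → (∀ x ∈ G, dist x y ∈ Metric.ball c r) →
          coverNum G r ≤ (C + Q) * (S.card + 1)^k := by
        intro y hyF c hc39 G hGF hGann
        by_cases hc60 : c ≤ 60*δ
        · -- small annulus: single ball around y
          have : coverNum G r ≤ Q := by
            refine hball y (61*δ) r G hr (fun x hx => ?_) ?_
            · have := hGann x hx
              rw [mem_ball, Real.dist_eq] at this
              have := abs_lt.mp this
              rw [← dist_eq_norm]
              linarith [this.2]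
            · have h1 : (1:ℝ) ≤ (60:ℝ)^d := one_le_pow₀ (by norm_num : (1:ℝ) ≤ 60)
              nlinarith
          omega
        · push_neg at hc60
          obtain ⟨V', z', ρ', hV'V, himp⟩ := lemA hδ0 hρ hc60.le hc39 (hfr hyF)
          have hGnear : G ⊆ NearSet V' z' ρ' (60*δ) := by
            intro x hx
            refine himp x (hfr (hGF hx)) ?_
            have := hGann x hx
            rw [mem_ball, Real.dist_eq] at this
            rw [← dist_eq_norm]
            linarith [le_of_lt this, hrδ]
          have hrank : Module.finrank ℝ V' ≤ k + 1 := by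
            have h1 := Submodule.finrank_lt_finrank_of_lt hV'V
            omega
          have := IH V' z' ρ' (60*δ) r G S hr (by linarith) (by
              calc 60*δ * 60^k = δ * 60^(k+1) := by ring
                _ ≤ 60^d * r := hδd) hrank hGnear
            ((distSet_mono hGF).trans hDS)
          omega
      by_cases hcap : ∃ y₁ ∈ F, (19/10)*ρ - δ ≤ dist y₁ y₀
      · obtain ⟨y₁, hy₁F, hy₁d⟩ := hcap
        -- pieces
        set A : ℝ → Set EE := fun c =>
          {x | x ∈ F ∧ dist x y₀ ∈ Metric.ball c r ∧ dist x y₀ ≤ (19/10)*ρ} with hA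
        set B : ℝ → Set EE := fun c =>
          {x | x ∈ F ∧ dist x y₁ ∈ Metric.ball c r ∧ (19/10)*ρ - δ ≤ dist x y₀} with hB
        have hFeq : F = (⋃ c ∈ S, A c) ∪ (⋃ c ∈ S, B c) := by
          apply Subset.antisymm
          · intro x hx
            rcases le_or_gt (dist x y₀) ((19/10)*ρ) with hle | hgt
            · left
              have hd : dist x y₀ ∈ distSet F := ⟨x, hx, y₀, hy₀, rfl⟩
              obtain ⟨c, hc⟩ := mem_iUnion.mp (hDS hd)
              simp only [mem_iUnion, exists_prop] at hc ⊢
              exact ⟨c, hc.1, hx, hc.2, hle⟩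
            · right
              have hd : dist x y₁ ∈ distSet F := ⟨x, hx, y₁, hy₁F, rfl⟩
              obtain ⟨c, hc⟩ := mem_iUnion.mp (hDS hd)
              simp only [mem_iUnion, exists_prop] at hc ⊢
              exact ⟨c, hc.1, hx, hc.2, by linarith⟩
          · rintro x (hx | hx) <;>
            · simp only [mem_iUnion, exists_prop, hA, hB, mem_setOf_eq] at hx
              obtain ⟨c, -, hxF, -⟩ := hx
              exact hxF
        have hAbound : ∀ c ∈ S, coverNum (A c) r ≤ (C + Q) * (S.card + 1)^k := by
          intro c hc
          by_cases hc39 : c ≤ (39/20)*ρ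
          · exact hpiece y₀ hy₀ c hc39 (A c) (fun x hx => hx.1) (fun x hx => hx.2.1)
          · push_neg at hc39
            have hAe : A c = ∅ := by
              rw [Set.eq_empty_iff_forall_notMem]
              rintro x ⟨-, hxb, hxd⟩
              rw [mem_ball, Real.dist_eq] at hxb
              have := abs_lt.mp hxb
              have hδρ : δ ≤ ρ/100 := by linarith
              linarith [this.1]
            rw [hAe, coverNum_empty]
            omega
        have hBbound : ∀ c ∈ S, coverNum (B c) r ≤ (C + Q) * (S.card + 1)^k := by
          intro c hc
          by_cases hc39 : c ≤ (39/20)*ρ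
          · exact hpiece y₁ hy₁F c hc39 (B c) (fun x hx => hx.1) (fun x hx => hx.2.1)
          · push_neg at hc39
            have hBe : B c = ∅ := by
              rw [Set.eq_empty_iff_forall_notMem]
              rintro x ⟨hxF, hxb, hxd⟩
              rw [mem_ball, Real.dist_eq] at hxb
              have h1 := abs_lt.mp hxb
              have hcapd : ‖x - y₁‖ ≤ (3/2)*ρ := by
                refine lemCap hδ0 hρ hy₀N (hfr hxF) (hfr hy₁F) ?_ ?_
                · rw [← dist_eq_norm]; exact hxd
                · rw [← dist_eq_norm]; exact hy₁d
              rw [← dist_eq_norm] at hcapd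
              have hδρ : δ ≤ ρ/100 := by linarith
              linarith [h1.1]
            rw [hBe, coverNum_empty]
            omega
        calc coverNum F r
            = coverNum ((⋃ c ∈ S, A c) ∪ (⋃ c ∈ S, B c)) r :=
              congrArg (fun s => coverNum s r) hFeq
          _ ≤ coverNum (⋃ c ∈ S, A c) r + coverNum (⋃ c ∈ S, B c) r := coverNum_union_le _ _ _
          _ ≤ (∑ c ∈ S, coverNum (A c) r) + (∑ c ∈ S, coverNum (B c) r) :=
              add_le_add (coverNum_biUnion_le _ _ _) (coverNum_biUnion_le _ _ _)
          _ ≤ S.card * ((C + Q) * (S.card + 1)^k) + S.card * ((C + Q) * (S.card + 1)^k) := by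
              refine add_le_add ?_ ?_
              · calc (∑ c ∈ S, coverNum (A c) r) ≤ S.card • ((C + Q) * (S.card + 1)^k) :=
                    Finset.sum_le_card_nsmul _ _ _ hAbound
                  _ = S.card * ((C + Q) * (S.card + 1)^k) := by rw [smul_eq_mul]
              · calc (∑ c ∈ S, coverNum (B c) r) ≤ S.card • ((C + Q) * (S.card + 1)^k) :=
                    Finset.sum_le_card_nsmul _ _ _ hBbound
                  _ = S.card * ((C + Q) * (S.card + 1)^k) := by rw [smul_eq_mul]
          _ ≤ (2*(C + Q) + 1) * (S.card + 1)^(k+1) := by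
              have h1 : S.card ≤ S.card + 1 := Nat.le_succ _
              calc S.card * ((C + Q) * (S.card + 1)^k) + S.card * ((C + Q) * (S.card + 1)^k)
                  = 2*(C + Q) * (S.card * (S.card + 1)^k) := by ring
                _ ≤ 2*(C + Q) * ((S.card + 1) * (S.card + 1)^k) :=
                    Nat.mul_le_mul_left _ (Nat.mul_le_mul_right _ h1)
                _ = 2*(C + Q) * (S.card + 1)^(k+1) := by ring
                _ ≤ (2*(C + Q) + 1) * (S.card + 1)^(k+1) := Nat.mul_le_mul_right _ (by omega)
      · push_neg at hcap
        set A : ℝ → Set EE := fun c =>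
          {x | x ∈ F ∧ dist x y₀ ∈ Metric.ball c r ∧ dist x y₀ ≤ (19/10)*ρ} with hA
        have hFeq : F = ⋃ c ∈ S, A c := by
          apply Subset.antisymm
          · intro x hx
            have hle : dist x y₀ ≤ (19/10)*ρ := by
              have := hcap x hx
              linarith
            have hd : dist x y₀ ∈ distSet F := ⟨x, hx, y₀, hy₀, rfl⟩
            obtain ⟨c, hc⟩ := mem_iUnion.mp (hDS hd)
            simp only [mem_iUnion, exists_prop] at hc ⊢
            exact ⟨c, hc.1, hx, hc.2, hle⟩
          · intro x hx
            simp only [mem_iUnion, exists_prop, hA, mem_setOf_eq] at hx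
            obtain ⟨c, -, hxF, -⟩ := hx
            exact hxF
        have hAbound : ∀ c ∈ S, coverNum (A c) r ≤ (C + Q) * (S.card + 1)^k := by
          intro c hc
          by_cases hc39 : c ≤ (39/20)*ρ
          · exact hpiece y₀ hy₀ c hc39 (A c) (fun x hx => hx.1) (fun x hx => hx.2.1)
          · push_neg at hc39
            have hAe : A c = ∅ := by
              rw [Set.eq_empty_iff_forall_notMem]
              rintro x ⟨-, hxb, hxd⟩
              rw [mem_ball, Real.dist_eq] at hxb
              have := abs_lt.mp hxb
              have hδρ : δ ≤ ρ/100 := by linarith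
              linarith [this.1]
            rw [hAe, coverNum_empty]
            omega
        calc coverNum F r
            = coverNum (⋃ c ∈ S, A c) r := congrArg (fun s => coverNum s r) hFeq
          _ ≤ ∑ c ∈ S, coverNum (A c) r := coverNum_biUnion_le _ _ _
          _ ≤ S.card • ((C + Q) * (S.card + 1)^k) := Finset.sum_le_card_nsmul _ _ _ hAbound
          _ = S.card * ((C + Q) * (S.card + 1)^k) := by rw [smul_eq_mul]
          _ ≤ (2*(C + Q) + 1) * (S.card + 1)^(k+1) := by
              have h1 : S.card ≤ S.card + 1 := Nat.le_succ _
              calc S.card * ((C + Q) * (S.card + 1)^k)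
                  ≤ (S.card + 1) * ((C + Q) * (S.card + 1)^k) := Nat.mul_le_mul_right _ h1
                _ = (C + Q) * (S.card + 1)^(k+1) := by ring
                _ ≤ (2*(C + Q) + 1) * (S.card + 1)^(k+1) := Nat.mul_le_mul_right _ (by omega)

/-- Key covering inequality: `N_r(K) ≤ C (N_r(D(K)) + 1)^d`. -/
theorem key_cover (hd : 0 < d) : ∃ C : ℕ, 0 < C ∧ ∀ (K : Set EE) (r : ℝ), 0 < r →
    Bornology.IsBounded K → coverNum K r ≤ C * (coverNum (distSet K) r + 1)^d := by
  classical
  obtain ⟨C, hC, hP⟩ := coverP (d := d) (d - 1)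
  refine ⟨C, hC, fun K r hr hK => ?_⟩
  rcases Set.eq_empty_or_nonempty K with hKe | hKne
  · rw [hKe, coverNum_empty]; exact Nat.zero_le _
  obtain ⟨y₀, hy₀⟩ := hKne
  have hDb : Bornology.IsBounded (distSet K) := distSet_isBounded hK
  obtain ⟨S, hScard, hScov⟩ := exists_cover_coverNum (exists_finite_cover_of_isBounded hDb hr)
  set A : ℝ → Set EE := fun c => {x | x ∈ K ∧ dist x y₀ ∈ Metric.ball c r} with hA
  have hKeq : K = ⋃ c ∈ S, A c := by
    apply Subset.antisymm
    · intro x hx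
      have hdm : dist x y₀ ∈ distSet K := ⟨x, hx, y₀, hy₀, rfl⟩
      obtain ⟨c, hc⟩ := mem_iUnion.mp (hScov hdm)
      simp only [mem_iUnion, exists_prop] at hc ⊢
      exact ⟨c, hc.1, hx, hc.2⟩
    · intro x hx
      simp only [mem_iUnion, exists_prop, hA, mem_setOf_eq] at hx
      obtain ⟨c, -, hxF, -⟩ := hx
      exact hxF
  have hAbound : ∀ c ∈ S, coverNum (A c) r ≤ C * (S.card + 1)^(d-1) := by
    intro c hc
    refine hP ⊤ y₀ c r r (A c) S hr le_rfl ?_ ?_ ?_ ?_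
    · calc r * 60^(d-1) = 60^(d-1) * r := by ring
        _ ≤ 60^d * r := by
          apply mul_le_mul_of_nonneg_right _ hr.le
          exact pow_le_pow_right₀ (by norm_num : (1:ℝ) ≤ 60) (Nat.sub_le d 1)
    · rw [show Module.finrank ℝ (⊤ : Submodule ℝ EE) = d from by
        rw [finrank_top]; exact finrank_euclideanSpace_fin]
      omega
    · intro x hx
      apply mem_nearSet_top
      have := hx.2
      rw [mem_ball, Real.dist_eq] at this
      exact this.le
    · refine (distSet_mono (fun x hx => hx.1)).trans hScov
  have hfinal : coverNum K r ≤ C * (S.card + 1)^d := by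
    calc coverNum K r = coverNum (⋃ c ∈ S, A c) r := congrArg (fun s => coverNum s r) hKeq
      _ ≤ ∑ c ∈ S, coverNum (A c) r := coverNum_biUnion_le _ _ _
      _ ≤ S.card • (C * (S.card + 1)^(d-1)) := Finset.sum_le_card_nsmul _ _ _ hAbound
      _ = S.card * (C * (S.card + 1)^(d-1)) := by rw [smul_eq_mul]
      _ ≤ (S.card + 1) * (C * (S.card + 1)^(d-1)) := Nat.mul_le_mul_right _ (Nat.le_succ _)
      _ = C * ((S.card + 1) * (S.card + 1)^(d-1)) := by ring
      _ = C * (S.card + 1)^(d-1+1) := by rw [pow_succ]; ring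
      _ = C * (S.card + 1)^d := by rw [Nat.sub_add_cancel hd]
  rwa [hScard] at hfinal

end Induction

section Analytic

/-- Finite-dimensional normed spaces: eventual nonnegativity of the box-count ratio. -/
lemma eventually_ratio_nonneg {X : Type*} [NormedAddCommGroup X] [NormedSpace ℝ X]
    [FiniteDimensional ℝ X] (G : Set X) (hG : Bornology.IsBounded G) :
    ∀ᶠ r in nhdsWithin (0:ℝ) (Set.Ioi 0),
      0 ≤ Real.log (coverNum G r : ℝ) / (-Real.log r) := by
  filter_upwards [Ioo_mem_nhdsGT (by norm_num : (0:ℝ) < 1)] with r hr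
  obtain ⟨hr0, hr1⟩ := hr
  have hlog : Real.log r < 0 := Real.log_neg hr0 hr1
  rcases Set.eq_empty_or_nonempty G with he | hne
  · rw [he, coverNum_empty]
    simp
  · have hN : 1 ≤ coverNum G r := coverNum_pos hne (exists_finite_cover_of_isBounded hG hr0)
    apply div_nonneg
    · apply Real.log_nonneg
      exact_mod_cast hN
    · linarith

lemma upperBoxDimBdd_empty {X : Type*} [PseudoMetricSpace X] :
    upperBoxDimBdd (∅ : Set X) = 0 := by
  have hfun : (fun r : ℝ => Real.log (coverNum (∅ : Set X) r : ℝ) / (-Real.log r))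
      = fun _ : ℝ => (0:ℝ) := by
    funext r
    rw [coverNum_empty]
    simp
  rw [upperBoxDimBdd, hfun, Filter.limsup_const]

lemma distSet_empty {X : Type*} [PseudoMetricSpace X] : distSet (∅ : Set X) = ∅ := by
  ext s
  simp [distSet]

/-- Eventual upper bound `2` on the box-count ratio for bounded subsets of `ℝ`. -/
lemma eventually_ratio_le_two {G : Set ℝ} (hG : Bornology.IsBounded G) :
    ∀ᶠ r in nhdsWithin (0:ℝ) (Set.Ioi 0),
      Real.log (coverNum G r : ℝ) / (-Real.log r) ≤ 2 := by
  rcases Set.eq_empty_or_nonempty G with he | hne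
  · filter_upwards with r
    rw [he, coverNum_empty]
    simp
  obtain ⟨R, hR⟩ := hG.subset_closedBall (0 : ℝ)
  have hRIcc : G ⊆ Set.Icc (-R) R := by rwa [Real.closedBall_eq_Icc, zero_sub, zero_add] at hR
  have hRnn : -R ≤ R := by
    obtain ⟨x, hx⟩ := hne
    have := hRIcc hx
    linarith [this.1, this.2]
  have hR0 : 0 ≤ R := by linarith
  set M : ℝ := 2*R + 2 with hM
  have hM1 : (1:ℝ) ≤ M := by linarith
  have hM0 : (0:ℝ) < M := by linarith
  set r₀ : ℝ := min (1/2) (Real.exp (-(Real.log M))) with hr₀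
  have hr₀0 : 0 < r₀ := lt_min (by norm_num) (Real.exp_pos _)
  filter_upwards [Ioc_mem_nhdsGT hr₀0] with r hr
  obtain ⟨hr0, hrr₀⟩ := hr
  have hr1 : r < 1 := lt_of_le_of_lt (hrr₀.trans (min_le_left _ _)) (by norm_num)
  have hlogr : Real.log r < 0 := Real.log_neg hr0 hr1
  have hlogM : Real.log M ≤ -Real.log r := by
    have h1 : r ≤ Real.exp (-(Real.log M)) := hrr₀.trans (min_le_right _ _)
    have h2 : Real.log r ≤ -(Real.log M) := (Real.log_le_iff_le_exp hr0).mpr h1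
    linarith
  -- covering number bound
  have hNle : (coverNum G r : ℝ) ≤ M / r := by
    have h1 : coverNum G r ≤ ⌊(R - (-R))/r⌋₊ + 1 := coverNum_of_subset_Icc hr0 hRnn hRIcc
    have h2 : (⌊(R - (-R))/r⌋₊ : ℝ) ≤ (R - (-R))/r := Nat.floor_le (div_nonneg (by linarith) hr0.le)
    have h3 : (coverNum G r : ℝ) ≤ (R - (-R))/r + 1 := by
      calc (coverNum G r : ℝ) ≤ (⌊(R - (-R))/r⌋₊ : ℝ) + 1 := by exact_mod_cast h1
        _ ≤ (R - (-R))/r + 1 := by linarith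
    calc (coverNum G r : ℝ) ≤ (R - (-R))/r + 1 := h3
      _ ≤ M / r := by
        rw [div_add' _ _ _ hr0.ne', div_le_div_iff₀ hr0 hr0]
        have : R - (-R) + r ≤ M := by linarith
        nlinarith
  have hN1 : (1:ℝ) ≤ (coverNum G r : ℝ) := by
    exact_mod_cast coverNum_pos hne (exists_finite_cover_of_isBounded hG hr0)
  have hlogN : Real.log (coverNum G r : ℝ) ≤ Real.log M + (-Real.log r) := by
    calc Real.log (coverNum G r : ℝ) ≤ Real.log (M / r) :=
          Real.log_le_log (by linarith) hNle
      _ = Real.log M - Real.log r := Real.log_div hM0.ne' hr0.ne'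
      _ = Real.log M + (-Real.log r) := by ring
  rw [div_le_iff₀ (by linarith : (0:ℝ) < -Real.log r)]
  calc Real.log (coverNum G r : ℝ) ≤ Real.log M + (-Real.log r) := hlogN
    _ ≤ (-Real.log r) + (-Real.log r) := by linarith
    _ = 2 * (-Real.log r) := by ring

lemma upperBoxDimBdd_le_two {G : Set ℝ} (hG : Bornology.IsBounded G) :
    upperBoxDimBdd G ≤ 2 := by
  apply Filter.limsup_le_of_le
  · exact Filter.isCoboundedUnder_le_of_eventually_le _ (eventually_ratio_nonneg G hG)
  · exact eventually_ratio_le_two hG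

lemma aux_log_small {c₀ ε x : ℝ} (hc : 0 ≤ c₀) (hε : 0 < ε) (hx : (2*c₀+1)/ε ≤ x) :
    c₀/x ≤ ε/2 := by
  have hx0 : (0:ℝ) < x := lt_of_lt_of_le (by positivity) hx
  rw [div_le_iff₀ hx0]
  have h1 : ε/2 * ((2*c₀+1)/ε) = c₀ + 1/2 := by field_simp
  calc c₀ ≤ ε/2 * ((2*c₀+1)/ε) := by rw [h1]; linarith
    _ ≤ ε/2 * x := mul_le_mul_of_nonneg_left hx (by positivity)

/-- The core dimension inequality for a bounded set. -/
lemma perK {d : ℕ} (hd : 0 < d) (K : Set (EuclideanSpace ℝ (Fin d)))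
    (hK : Bornology.IsBounded K) :
    upperBoxDimBdd K ≤ (d:ℝ) * upperBoxDimBdd (distSet K) := by
  rcases Set.eq_empty_or_nonempty K with he | hne
  · rw [he, distSet_empty, upperBoxDimBdd_empty, upperBoxDimBdd_empty, mul_zero]
  obtain ⟨C, hC, hkey⟩ := key_cover (d := d) hd
  have hDb : Bornology.IsBounded (distSet K) := distSet_isBounded hK
  have hDne : (distSet K).Nonempty := distSet_nonempty hne
  set L : ℝ := upperBoxDimBdd (distSet K) with hLdef
  apply le_of_forall_pos_le_add
  intro ε hε
  set c₀ : ℝ := Real.log C + d * Real.log 2 + d * Real.log 2 with hc₀def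
  have hc₀ : 0 ≤ c₀ := by
    have h1 : (0:ℝ) ≤ Real.log C := Real.log_nonneg (by exact_mod_cast hC)
    have h2 : (0:ℝ) ≤ Real.log 2 := Real.log_nonneg (by norm_num)
    positivity
  have hd0 : (0:ℝ) < d := by exact_mod_cast hd
  -- eventual bound on the distance-set ratio
  have hLbd : Filter.IsBoundedUnder (· ≤ ·) (nhdsWithin (0:ℝ) (Set.Ioi 0))
      (fun r : ℝ => Real.log (coverNum (distSet K) r : ℝ) / (-Real.log r)) :=
    ⟨2, by rw [Filter.eventually_map]; exact eventually_ratio_le_two hDb⟩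
  have hfd : ∀ᶠ r in nhdsWithin (0:ℝ) (Set.Ioi 0),
      Real.log (coverNum (distSet K) r : ℝ) / (-Real.log r) < L + ε/(2*d) :=
    Filter.eventually_lt_of_limsup_lt (lt_add_of_pos_right _ (by positivity)) hLbd
  set r₀ : ℝ := min (1/2) (Real.exp (-((2*c₀+1)/ε))) with hr₀def
  have hr₀0 : 0 < r₀ := lt_min (by norm_num) (Real.exp_pos _)
  have hev : ∀ᶠ r in nhdsWithin (0:ℝ) (Set.Ioi 0),
      Real.log (coverNum K r : ℝ) / (-Real.log r) ≤ (d:ℝ)*L + ε := by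
    filter_upwards [hfd, Ioc_mem_nhdsGT hr₀0] with r hfdr hrIoc
    obtain ⟨hr0, hrr₀⟩ := hrIoc
    have hr1 : r < 1 := lt_of_le_of_lt (hrr₀.trans (min_le_left _ _)) (by norm_num)
    have hlogr : Real.log r < 0 := Real.log_neg hr0 hr1
    have hlogrpos : (0:ℝ) < -Real.log r := by linarith
    set m : ℕ := coverNum (distSet K) r with hmdef
    have hm1 : 1 ≤ m := coverNum_pos hDne (exists_finite_cover_of_isBounded hDb hr0)
    have hN1 : 1 ≤ coverNum K r := coverNum_pos hne (exists_finite_cover_of_isBounded hK hr0)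
    have hNkey : coverNum K r ≤ C * (m + 1)^d := hkey K r hr0 hK
    -- logarithmic bound
    have hmr : ((m:ℝ) + 1)^d ≤ (2*(m:ℝ))^d := by
      apply pow_le_pow_left₀ (by positivity)
      have : (1:ℝ) ≤ (m:ℝ) := by exact_mod_cast hm1
      linarith
    have hlogN : Real.log (coverNum K r : ℝ) ≤ c₀ + d * Real.log m := by
      have h1 : (coverNum K r : ℝ) ≤ (C:ℝ) * ((m:ℝ)+1)^d := by exact_mod_cast hNkey
      have h2 : (coverNum K r : ℝ) ≤ (C:ℝ) * (2*(m:ℝ))^d := by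
        calc (coverNum K r : ℝ) ≤ (C:ℝ) * ((m:ℝ)+1)^d := h1
          _ ≤ (C:ℝ) * (2*(m:ℝ))^d := by
            apply mul_le_mul_of_nonneg_left hmr (by positivity)
      have hC0 : (0:ℝ) < (C:ℝ) := by exact_mod_cast hC
      have hm0 : (0:ℝ) < (m:ℝ) := by exact_mod_cast hm1
      calc Real.log (coverNum K r : ℝ) ≤ Real.log ((C:ℝ) * (2*(m:ℝ))^d) := by
            apply Real.log_le_log (by exact_mod_cast hN1) h2
        _ = Real.log C + d * Real.log (2*(m:ℝ)) := by
            rw [Real.log_mul hC0.ne' (by positivity), Real.log_pow]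
        _ = Real.log C + d * (Real.log 2 + Real.log m) := by
            rw [Real.log_mul (by norm_num) hm0.ne']
        _ ≤ c₀ + d * Real.log m := by
            rw [hc₀def]
            have h2' : (0:ℝ) ≤ Real.log 2 := Real.log_nonneg (by norm_num)
            nlinarith
    -- divide
    have hstep1 : Real.log (coverNum K r : ℝ) / (-Real.log r)
        ≤ (c₀ + d * Real.log m) / (-Real.log r) := by
      gcongr
    have hstep2 : (c₀ + d * Real.log m) / (-Real.log r)
        = c₀/(-Real.log r) + d * (Real.log m / (-Real.log r)) := by
      rw [add_div, mul_div_assoc]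
    have hsmall : c₀/(-Real.log r) ≤ ε/2 := by
      apply aux_log_small hc₀ hε
      have h1 : r ≤ Real.exp (-((2*c₀+1)/ε)) := hrr₀.trans (min_le_right _ _)
      have h2 : Real.log r ≤ -((2*c₀+1)/ε) := (Real.log_le_iff_le_exp hr0).mpr h1
      linarith
    have hfdm : d * (Real.log m / (-Real.log r)) ≤ d * (L + ε/(2*d)) := by
      apply mul_le_mul_of_nonneg_left (le_of_lt hfdr) (by positivity)
    have hdε : (d:ℝ) * (L + ε/(2*d)) = d*L + ε/2 := by
      rw [mul_add, ← mul_div_assoc, mul_comm (2:ℝ) (d:ℝ), ← div_div,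
        mul_div_cancel_left₀ _ hd0.ne']
    calc Real.log (coverNum K r : ℝ) / (-Real.log r)
        ≤ (c₀ + d * Real.log m) / (-Real.log r) := hstep1
      _ = c₀/(-Real.log r) + d * (Real.log m / (-Real.log r)) := hstep2
      _ ≤ ε/2 + (d*L + ε/2) := by
          have := hfdm
          rw [hdε] at this
          linarith [hsmall]
      _ = (d:ℝ)*L + ε := by ring
  apply Filter.limsup_le_of_le _ hev
  exact Filter.isCoboundedUnder_le_of_eventually_le _ (eventually_ratio_nonneg K hK)

end Analytic

/-- For any `F ⊆ ℝ^d`, the upper box dimension of the distance set satisfies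
`dim̄_B D(F) ≥ dim̄_B F / d`. -/
theorem stmt8 {d : ℕ} (F : Set (EuclideanSpace ℝ (Fin d))) :
    upperBoxDim F / (d : ℝ) ≤ upperBoxDim (distSet F) := by
  have hbdd : BddAbove (Set.range fun K : {K : Set ℝ // K ⊆ distSet F ∧ Bornology.IsBounded K} =>
      upperBoxDimBdd K.1) := by
    refine ⟨2, ?_⟩
    rintro x ⟨K, rfl⟩
    exact upperBoxDimBdd_le_two K.2.2
  have htnn : 0 ≤ upperBoxDim (distSet F) := by
    have h0 := le_ciSup hbdd ⟨∅, Set.empty_subset _, Bornology.isBounded_empty⟩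
    rw [upperBoxDimBdd_empty] at h0
    exact h0
  rcases Nat.eq_zero_or_pos d with hd0 | hd
  · subst hd0
    rw [Nat.cast_zero, div_zero]
    exact htnn
  · have hmain : upperBoxDim F ≤ (d:ℝ) * upperBoxDim (distSet F) := by
      apply Real.iSup_le _ (mul_nonneg (Nat.cast_nonneg d) htnn)
      rintro ⟨K, hKF, hKb⟩
      calc upperBoxDimBdd K ≤ (d:ℝ) * upperBoxDimBdd (distSet K) := perK hd K hKb
        _ ≤ (d:ℝ) * upperBoxDim (distSet F) := by
            apply mul_le_mul_of_nonneg_left _ (Nat.cast_nonneg d)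
            exact le_ciSup hbdd ⟨distSet K, distSet_mono hKF, distSet_isBounded hKb⟩
    rw [div_le_iff₀ (by exact_mod_cast hd : (0:ℝ) < (d:ℝ))]
    calc upperBoxDim F ≤ (d:ℝ) * upperBoxDim (distSet F) := hmain
      _ = upperBoxDim (distSet F) * (d:ℝ) := mul_comm _ _
end
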